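/- arXiv:math/9406223 — 4 statements merged into one kernel-verified Lean document; each statement's English description precedes it below -/
import Mathlib

section
/- For 0 ≤ n, m ≤ N-1, the polynomials x ↦ Q_n(x-1,α+1,β,N-1) are orthogonal on {0,...,N} with respect to the measure x·ρ(x,α,β,N), with Σ_{x=0}^N Q_m(x-1,α+1,β,N-1) Q_n(x-1,α+1,β,N-1) x ρ(x,α,β,N) = (N(α+1)/(α+β+2)) · δ_{mn}/π_n(α+1,β,N-1). -/
open Finset

noncomputable def poch (a : ℝ) (k : ℕ) : ℝ := ∏ i ∈ Finset.range k, (a + i)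

noncomputable def hahnQ (n : ℕ) (x α β : ℝ) (N : ℕ) : ℝ :=
  ∑ k ∈ Finset.range (n + 1),
    poch (-(n : ℝ)) k * poch ((n : ℝ) + α + β + 1) k * poch (-x) k /
      ((Nat.factorial k : ℝ) * poch (α + 1) k * poch (-(N : ℝ)) k)

noncomputable def binomR (a b : ℝ) : ℝ :=
  Real.Gamma (a + 1) / (Real.Gamma (b + 1) * Real.Gamma (a - b + 1))

noncomputable def hahnWeight (x : ℕ) (α β : ℝ) (N : ℕ) : ℝ :=
  binomR ((x : ℝ) + α) (x : ℝ) * binomR ((N : ℝ) - x + β) ((N : ℝ) - x) /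
    binomR ((N : ℝ) + α + β + 1) (N : ℝ)

noncomputable def hahnPi (n : ℕ) (α β : ℝ) (N : ℕ) : ℝ :=
  ((-1 : ℝ) ^ n * poch (-(N : ℝ)) n * poch (α + 1) n * poch (α + β + 1) n) /
      ((Nat.factorial n : ℝ) * poch ((N : ℝ) + α + β + 2) n * poch (β + 1) n) *
    ((2 * (n : ℝ) + α + β + 1) / (α + β + 1))

noncomputable def kraw (n : ℕ) (x p : ℝ) (N : ℕ) : ℝ :=
  ∑ k ∈ Finset.range (n + 1),
    poch (-(n : ℝ)) k * poch (-x) k / ((Nat.factorial k : ℝ) * poch (-(N : ℝ)) k) * (1 / p) ^ k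

noncomputable def dualR (n : ℕ) (lam α β : ℝ) (N : ℕ) : ℝ :=
  ∑ k ∈ Finset.range (n + 1),
    poch (-(n : ℝ)) k * (∏ i ∈ Finset.range k, ((i : ℝ) * (α + β + 1 + i) - lam)) /
      ((Nat.factorial k : ℝ) * poch (α + 1) k * poch (-(N : ℝ)) k)

noncomputable def ktil (l : ℕ) (x p : ℝ) (N : ℕ) : ℝ :=
  (N.choose l : ℝ) * (p / (1 - p)) ^ l * kraw l x p N

lemma poch_zero (a : ℝ) : poch a 0 = 1 := by simp [poch]

lemma poch_succ (a : ℝ) (k : ℕ) : poch a (k + 1) = poch a k * (a + k) := by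
  rw [poch, Finset.prod_range_succ]; rfl

lemma poch_succ' (a : ℝ) (k : ℕ) : poch a (k + 1) = a * poch (a + 1) k := by
  rw [poch, Finset.prod_range_succ']
  simp only [Nat.cast_zero, add_zero, mul_comm, poch]
  congr 1
  apply Finset.prod_congr rfl
  intro i _
  push_cast; ring

lemma poch_one (a : ℝ) : poch a 1 = a := by rw [poch_succ, poch_zero]; simp

lemma poch_pos {a : ℝ} (ha : 0 < a) (k : ℕ) : 0 < poch a k := by
  induction k with
  | zero => simp [poch_zero]
  | succ k ih => rw [poch_succ]; positivity

lemma poch_ne_zero {a : ℝ} (ha : 0 < a) (k : ℕ) : poch a k ≠ 0 := (poch_pos ha k).ne'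

lemma poch_neg_nat_ne_zero {N k : ℕ} (h : k ≤ N) : poch (-(N : ℝ)) k ≠ 0 := by
  rw [poch]
  apply Finset.prod_ne_zero_iff.mpr
  intro i hi
  rw [Finset.mem_range] at hi
  have : (i : ℝ) < (N : ℝ) := by exact_mod_cast lt_of_lt_of_le hi h
  intro hc; linarith [hc]

lemma vandermonde_poch (a b : ℝ) : ∀ M : ℕ,
    ∑ x ∈ Finset.range (M + 1), (M.choose x : ℝ) * poch a x * poch b (M - x) = poch (a + b) M := by
  intro M
  induction M with
  | zero => simp [poch_zero]
  | succ M ih =>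
    have key : ∑ x ∈ Finset.range (M + 1), (M.choose x : ℝ) * poch a x * poch b (M - x) * ((a + x) + (b + (M - x : ℕ))) = poch (a+b) M * (a + b + M) := by
      rw [← ih, Finset.sum_mul]
      apply Finset.sum_congr rfl
      intro x hx
      rw [Finset.mem_range] at hx
      have hxM : x ≤ M := Nat.lt_succ_iff.mp hx
      have : ((M - x : ℕ) : ℝ) = (M : ℝ) - x := by
        rw [Nat.cast_sub hxM]
      rw [this]; ring
    rw [← poch_succ] at key
    rw [← key]
    have expand : ∀ x ∈ Finset.range (M+1), (M.choose x : ℝ) * poch a x * poch b (M - x) * ((a + x) + (b + (M - x : ℕ)))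
        = (M.choose x : ℝ) * poch a (x+1) * poch b (M - x) + (M.choose x : ℝ) * poch a x * poch b (M - x + 1) := by
      intro x hx
      rw [poch_succ a x, poch_succ b (M - x)]
      ring
    rw [Finset.sum_congr rfl expand, Finset.sum_add_distrib]
    -- first sum: reindex
    have h1 : ∑ x ∈ Finset.range (M+1), (M.choose x : ℝ) * poch a (x+1) * poch b (M - x)
        = ∑ x ∈ Finset.range (M+2), ((if x = 0 then 0 else (M.choose (x-1) : ℝ))) * poch a x * poch b (M + 1 - x) := by
      rw [Finset.sum_range_succ' (fun x => ((if x = 0 then 0 else (M.choose (x-1) : ℝ))) * poch a x * poch b (M + 1 - x)) (M+1)]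
      norm_num
      apply Finset.sum_congr rfl
      intro x hx
      rw [Finset.mem_range] at hx
      have h' : M + 1 - (x + 1) = M - x := by omega
      simp only [h', Nat.succ_sub_one, if_neg (Nat.succ_ne_zero x)]
    have h2 : ∑ x ∈ Finset.range (M+1), (M.choose x : ℝ) * poch a x * poch b (M - x + 1)
        = ∑ x ∈ Finset.range (M+2), (M.choose x : ℝ) * poch a x * poch b (M + 1 - x) := by
      rw [Finset.sum_range_succ (fun x => (M.choose x : ℝ) * poch a x * poch b (M + 1 - x)) (M+1)]
      simp only [Nat.choose_succ_self, Nat.cast_zero, zero_mul, add_zero]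
      apply Finset.sum_congr rfl
      intro x hx
      rw [Finset.mem_range] at hx
      have : M + 1 - x = M - x + 1 := by omega
      rw [this]
    rw [h1, h2, ← Finset.sum_add_distrib]
    apply Finset.sum_congr rfl
    intro x hx
    rcases Nat.eq_zero_or_pos x with h0 | hpos
    · subst h0; simp
    · have hx0 : x ≠ 0 := hpos.ne'
      obtain ⟨y, rfl⟩ := Nat.exists_eq_succ_of_ne_zero hx0
      rw [if_neg (Nat.succ_ne_zero y)]
      have hps : (M+1).choose (y+1) = M.choose y + M.choose (y+1) := Nat.choose_succ_succ M y
      rw [hps, Nat.succ_sub_one]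
      push_cast
      ring

-- ## weight
noncomputable def Wt (α β : ℝ) (N : ℕ) (x : ℕ) : ℝ :=
  (N.choose x : ℝ) * poch (α + 1) x * poch (β + 1) (N - x) / poch (α + β + 2) N

lemma Wt_sum (α β : ℝ) (N : ℕ) (h : α + β + 2 > 0) :
    ∑ x ∈ Finset.range (N + 1), Wt α β N x = 1 := by
  unfold Wt
  rw [← Finset.sum_div]
  rw [vandermonde_poch (α+1) (β+1) N]
  have : α + 1 + (β + 1) = α + β + 2 := by ring
  rw [this, div_self (poch_ne_zero h N)]

lemma Gamma_poch (a : ℝ) (ha : 0 < a) (n : ℕ) : Real.Gamma (a + n) = poch a n * Real.Gamma a := by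
  induction n with
  | zero => simp [poch_zero]
  | succ n ih =>
    have h1 : a + (n + 1 : ℕ) = (a + n) + 1 := by push_cast; ring
    rw [h1, Real.Gamma_add_one (by positivity), ih, poch_succ]
    ring

lemma hahnWeight_eq_Wt {x N : ℕ} (hx : x ≤ N) {α β : ℝ} (hα : -1 < α) (hβ : -1 < β) :
    hahnWeight x α β N = Wt α β N x := by
  have hxc : ((N - x : ℕ) : ℝ) = (N : ℝ) - x := by
    rw [Nat.cast_sub hx]
  have hα1 : (0:ℝ) < α + 1 := by linarith
  have hβ1 : (0:ℝ) < β + 1 := by linarith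
  have hαβ : (0:ℝ) < α + β + 2 := by linarith
  have hΓα : Real.Gamma (α+1) ≠ 0 := (Real.Gamma_pos_of_pos hα1).ne'
  have hΓβ : Real.Gamma (β+1) ≠ 0 := (Real.Gamma_pos_of_pos hβ1).ne'
  have hΓab : Real.Gamma (α+β+2) ≠ 0 := (Real.Gamma_pos_of_pos hαβ).ne'
  have e1 : binomR ((x : ℝ) + α) (x : ℝ) = poch (α+1) x / (x.factorial : ℝ) := by
    unfold binomR
    have h1 : (x:ℝ) + α + 1 = (α + 1) + x := by ring
    have h2 : (x:ℝ) + α - x + 1 = α + 1 := by ring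
    rw [h1, h2, Gamma_poch (α+1) hα1 x, Real.Gamma_nat_eq_factorial]
    rw [div_eq_div_iff (by positivity) (by positivity : ((x.factorial:ℝ)) ≠ 0)]
    ring
  have e2 : binomR ((N : ℝ) - x + β) ((N : ℝ) - x) = poch (β+1) (N - x) / ((N-x).factorial : ℝ) := by
    unfold binomR
    have h1 : (N:ℝ) - x + β + 1 = (β + 1) + ((N - x : ℕ) : ℝ) := by rw [hxc]; ring
    have h2 : (N:ℝ) - x + β - ((N:ℝ) - x) + 1 = β + 1 := by ring
    have h3 : (N:ℝ) - x + 1 = ((N - x : ℕ) : ℝ) + 1 := by rw [hxc]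
    rw [h1, h2, h3, Gamma_poch (β+1) hβ1 (N-x), Real.Gamma_nat_eq_factorial]
    rw [div_eq_div_iff (by positivity) (by positivity : (((N-x).factorial:ℝ)) ≠ 0)]
    ring
  have e3 : binomR ((N : ℝ) + α + β + 1) (N : ℝ) = poch (α+β+2) N / (N.factorial : ℝ) := by
    unfold binomR
    have h1 : (N:ℝ) + α + β + 1 + 1 = (α + β + 2) + N := by ring
    have h2 : (N:ℝ) + α + β + 1 - N + 1 = α + β + 2 := by ring
    rw [h1, h2, Gamma_poch (α+β+2) hαβ N, Real.Gamma_nat_eq_factorial]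
    rw [div_eq_div_iff (by positivity) (by positivity : ((N.factorial:ℝ)) ≠ 0)]
    ring
  rw [hahnWeight, e1, e2, e3, Wt, Nat.cast_choose ℝ hx]
  have hfx : ((x.factorial : ℝ)) ≠ 0 := by positivity
  have hfnx : (((N-x).factorial : ℝ)) ≠ 0 := by positivity
  have hfN : ((N.factorial : ℝ)) ≠ 0 := by positivity
  have hp : poch (α+β+2) N ≠ 0 := poch_ne_zero hαβ N
  field_simp

-- weight shift
lemma Wt_shift {N : ℕ} (hN : 1 ≤ N) {α β : ℝ} (hαβ : α + β + 2 ≠ 0) (y : ℕ) (hy : y ≤ N - 1) :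
    ((y:ℝ) + 1) * Wt α β N (y + 1) = (N:ℝ) * (α + 1) / (α + β + 2) * Wt (α + 1) β (N - 1) y := by
  unfold Wt
  have hN' : N - 1 + 1 = N := by omega
  have h1 : (N.choose (y+1) : ℝ) * (y+1) = (N:ℝ) * ((N-1).choose y : ℝ) := by
    have h := Nat.add_one_mul_choose_eq (N-1) y
    simp only [Nat.succ_eq_add_one, hN'] at h
    exact_mod_cast congrArg (Nat.cast : ℕ → ℝ) h.symm
  have h2 : poch (α+1) (y+1) = (α + 1) * poch (α + 1 + 1) y := poch_succ' (α+1) y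
  have h3 : N - (y+1) = (N-1) - y := by omega
  have h4 : poch (α+β+2) N = (α+β+2) * poch (α+β+3) (N-1) := by
    conv_lhs => rw [← hN']
    rw [poch_succ']
    have : α + β + 2 + 1 = α + β + 3 := by ring
    rw [this]
  have h5 : α + 1 + β + 2 = α + β + 3 := by ring
  rw [h3, h4, h5]
  rcases eq_or_ne (poch (α+β+3) (N-1)) 0 with hp | hp
  · simp [hp]
  · field_simp
    linear_combination poch (α+1) (y+1) * poch (β+1) (N-1-y) * h1 + (N:ℝ) * (((N-1).choose y : ℕ) : ℝ) * poch (β+1) (N-1-y) * h2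

noncomputable def Bf (α : ℝ) (N : ℕ) (x : ℝ) : ℝ := (x + α + 1) * (x - N)
noncomputable def Df (β : ℝ) (N : ℕ) (x : ℝ) : ℝ := x * (x - β - N - 1)

lemma choose_cast_succ (N x : ℕ) (h : x < N) :
    (N.choose (x+1) : ℝ) * ((x:ℝ)+1) = (N.choose x : ℝ) * ((N:ℝ) - x) := by
  have hh := Nat.choose_succ_right_eq N x
  have := congrArg (Nat.cast : ℕ → ℝ) hh
  push_cast [Nat.cast_sub h.le] at this
  exact_mod_cast this

lemma choose_mul_N (N x : ℕ) (hN : 1 ≤ N) (h : x < N) :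
    (N.choose x : ℝ) * ((N:ℝ) - x) = (N:ℝ) * ((N-1).choose x : ℝ) := by
  have hN' : N - 1 + 1 = N := by omega
  have h1 := Nat.add_one_mul_choose_eq (N-1) x
  simp only [Nat.succ_eq_add_one, hN'] at h1
  have h2 := choose_cast_succ N x h
  have := congrArg (Nat.cast : ℕ → ℝ) h1
  push_cast at this
  rw [h2] at this
  linarith

lemma pearson (α β : ℝ) (N x : ℕ) :
    Wt α β N (x+1) * Df β N ((x:ℝ)+1) = Wt α β N x * Bf α N ((x:ℝ)) := by
  rcases lt_or_ge x N with h | h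
  · unfold Wt Bf Df
    have e : N - x = (N - (x+1)) + 1 := by omega
    have ec : ((N - (x+1) : ℕ) : ℝ) = (N:ℝ) - x - 1 := by
      rw [Nat.cast_sub (by omega)]; push_cast; ring
    rw [e, poch_succ (β+1) (N-(x+1)), poch_succ (α+1) x]
    rw [div_mul_eq_mul_div, div_mul_eq_mul_div]
    congr 1
    have hc := choose_cast_succ N x h
    rw [ec]
    linear_combination (poch (α+1) x * (α + 1 + (x:ℝ)) * poch (β+1) (N-(x+1)) * ((x:ℝ)+1-β-(N:ℝ)-1)) * hc
  · rcases eq_or_lt_of_le h with rfl | h'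
    · have hz : N.choose (N+1) = 0 := Nat.choose_eq_zero_of_lt (by omega)
      simp [Wt, Bf, hz, sub_self]
    · have hz1 : N.choose (x+1) = 0 := Nat.choose_eq_zero_of_lt (by omega)
      have hz2 : N.choose x = 0 := Nat.choose_eq_zero_of_lt (by omega)
      simp [Wt, hz1, hz2]

lemma Wt_Bf {N x : ℕ} (hN : 1 ≤ N) (hx : x < N) {α β : ℝ} (hα : -1 < α) (hβ : -1 < β) :
    Wt α β N x * Bf α N (x:ℝ) =
      -((N:ℝ) * (α+1) * (β+1) * ((N:ℝ)+α+β+2) / ((α+β+2)*(α+β+3))) * Wt (α+1) (β+1) (N-1) x := by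
  unfold Wt Bf
  have hN' : N - 1 + 1 = N := by omega
  have h1 : (N.choose x : ℝ) * ((N:ℝ) - x) = (N:ℝ) * ((N-1).choose x : ℝ) := choose_mul_N N x hN hx
  have h2 : poch (α+1) x * ((x:ℝ) + α + 1) = (α+1) * poch (α+2) x := by
    have ha := poch_succ (α+1) x
    have hb := poch_succ' (α+1) x
    have e1 : α + 1 + 1 = α + 2 := by ring
    rw [e1] at hb
    rw [← hb, ha]; ring
  have h3 : poch (β+1) (N-x) = (β+1) * poch (β+2) (N-1-x) := by
    have e : N - x = (N-1-x) + 1 := by omega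
    have e1 : β + 1 + 1 = β + 2 := by ring
    rw [e, poch_succ', e1]
  have h4 : poch (α+β+2) N * (α+β+2+(N:ℝ)) = (α+β+2)*(α+β+3)*poch (α+β+4) (N-1) := by
    have ha := poch_succ (α+β+2) N
    have hb := poch_succ' (α+β+2) N
    have e1 : α+β+2+1 = α+β+3 := by ring
    have e2 : α+β+3+1 = α+β+4 := by ring
    rw [e1] at hb
    have hc' := poch_succ' (α+β+3) (N-1)
    rw [hN', e2] at hc'
    rw [hc'] at hb
    rw [hb] at ha
    rw [← ha]; ring
  have hab2 : (0:ℝ) < α+β+2 := by linarith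
  have hab3 : (0:ℝ) < α+β+3 := by linarith
  have habN : (0:ℝ) < α+β+2+N := by positivity
  have hP : poch (α+β+2) N ≠ 0 := poch_ne_zero hab2 N
  have hP2 : poch (α+β+4) (N-1) ≠ 0 := poch_ne_zero (by linarith) (N-1)
  have e5 : α + 1 + (β+1) + 2 = α + β + 4 := by ring
  rw [e5, h3, show α+1+1 = α+2 from by ring, show β+1+1 = β+2 from by ring]
  field_simp
  linear_combination (-( (N.choose x : ℝ) * poch (α+1) x * (β+1) * poch (β+2) (N-1-x) * ((x:ℝ)+α+1) * ((x:ℝ)-(N:ℝ)))) * h4 + ((N.choose x : ℝ) * (β+1) * poch (β+2) (N-1-x) * ((x:ℝ)-(N:ℝ)) * poch (α+β+2) N * (α+β+2+(N:ℝ))) * h2 + (-((α+1) * poch (α+2) x * (β+1) * poch (β+2) (N-1-x) * poch (α+β+2) N * (α+β+2+(N:ℝ)))) * h1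

noncomputable def coefA (n : ℕ) (α β : ℝ) (N : ℕ) (k : ℕ) : ℝ :=
  poch (-(n:ℝ)) k * poch ((n:ℝ)+α+β+1) k / ((k.factorial : ℝ) * poch (α+1) k * poch (-(N:ℝ)) k)

lemma hahnQ_eq (n : ℕ) (x α β : ℝ) (N : ℕ) :
    hahnQ n x α β N = ∑ k ∈ Finset.range (n+1), coefA n α β N k * poch (-x) k := by
  unfold hahnQ coefA
  apply Finset.sum_congr rfl
  intro k _
  ring

lemma hahnQ_zero (x α β : ℝ) (N : ℕ) : hahnQ 0 x α β N = 1 := by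
  simp [hahnQ, poch_zero]

-- difference relations
lemma poch_diff_up (x : ℝ) (k : ℕ) :
    poch (-(x+1)) (k+1) - poch (-x) (k+1) = -((k:ℝ)+1) * poch (-x) k := by
  have r1 : poch (-(x+1)) (k+1) = (-x-1) * poch (-x) k := by
    have h := poch_succ' (-(x+1)) k
    have e : -(x+1) + 1 = -x := by ring
    rw [e] at h
    rw [h]; ring
  have r3 : poch (-x) (k+1) = poch (-x) k * (-x + k) := poch_succ (-x) k
  rw [r1, r3]; ring

lemma poch_diff_down (x : ℝ) (k : ℕ) :
    poch (-(x-1)) (k+1) - poch (-x) (k+1) = ((k:ℝ)+1) * poch (1-x) k := by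
  have e : -(x-1) = 1 - x := by ring
  rw [e, poch_succ (1-x) k]
  have r4 : poch (-x) (k+1) = (-x) * poch (1-x) k := by
    have h := poch_succ' (-x) k
    have e2 : -x + 1 = 1 - x := by ring
    rw [e2] at h
    exact h
  rw [r4]; ring

lemma poch_key (x : ℝ) (k : ℕ) : (-x) * poch (1-x) k = poch (-x) k * (-x + k) := by
  have r4 : poch (-x) (k+1) = (-x) * poch (1-x) k := by
    have h := poch_succ' (-x) k
    have e : -x + 1 = 1 - x := by ring
    rw [e] at h
    exact h
  rw [← r4, poch_succ]

lemma Lv (α β : ℝ) (N : ℕ) (k : ℕ) (x : ℝ) :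
    Bf α N x * (poch (-(x+1)) (k+1) - poch (-x) (k+1)) +
      Df β N x * (poch (-(x-1)) (k+1) - poch (-x) (k+1)) =
    ((k:ℝ)+1)*((k:ℝ)+α+β+2) * poch (-x) (k+1) + ((k:ℝ)+1)*((N:ℝ)-k)*((k:ℝ)+α+1) * poch (-x) k := by
  rw [poch_diff_up, poch_diff_down, poch_succ (-x) k]
  unfold Bf Df
  linear_combination (-(((k:ℝ)+1) * (x - β - (N:ℝ) - 1))) * poch_key x k

lemma coefA_rec {n N k : ℕ} (hk : k < n) (hn : n ≤ N) {α β : ℝ} (hα : -1 < α) :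
    coefA n α β N (k+1) * (((k:ℝ)+1) * ((N:ℝ)-k) * (α+1+k)) =
      coefA n α β N k * (((n:ℝ)-k) * ((n:ℝ)+k+α+β+1)) := by
  unfold coefA
  rw [poch_succ (-(n:ℝ)) k, poch_succ ((n:ℝ)+α+β+1) k, poch_succ (α+1) k, poch_succ (-(N:ℝ)) k,
    Nat.factorial_succ]
  have h1 : (k.factorial : ℝ) ≠ 0 := by positivity
  have h2 : poch (α+1) k ≠ 0 := poch_ne_zero (by linarith) k
  have h3 : poch (-(N:ℝ)) k ≠ 0 := poch_neg_nat_ne_zero (by omega)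
  have h4 : (α+1+(k:ℝ)) ≠ 0 := by
    have hk0 : (0:ℝ) ≤ k := Nat.cast_nonneg k
    intro hc; linarith
  have h5 : (-(N:ℝ)+k) ≠ 0 := by
    have : (k:ℝ) < (N:ℝ) := by exact_mod_cast lt_of_lt_of_le hk hn
    intro hc; linarith
  have h6 : ((k:ℝ)+1) ≠ 0 := by positivity
  push_cast
  field_simp
  ring

lemma hahnQ_diffeq {n N : ℕ} (hn : n ≤ N) {α β : ℝ} (hα : -1 < α) (x : ℝ) :
    Bf α N x * (hahnQ n (x+1) α β N - hahnQ n x α β N) +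
      Df β N x * (hahnQ n (x-1) α β N - hahnQ n x α β N) =
    (n:ℝ)*((n:ℝ)+α+β+1) * hahnQ n x α β N := by
  rw [hahnQ_eq n (x+1), hahnQ_eq n (x-1), hahnQ_eq n x]
  rw [← Finset.sum_sub_distrib, ← Finset.sum_sub_distrib, Finset.mul_sum, Finset.mul_sum,
    ← Finset.sum_add_distrib, Finset.mul_sum]
  have step1 : ∀ k ∈ Finset.range (n+1),
      (Bf α N x * (coefA n α β N k * poch (-(x+1)) k - coefA n α β N k * poch (-x) k) +
        Df β N x * (coefA n α β N k * poch (-(x-1)) k - coefA n α β N k * poch (-x) k)) =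
      coefA n α β N k *
        (Bf α N x * (poch (-(x+1)) k - poch (-x) k) + Df β N x * (poch (-(x-1)) k - poch (-x) k)) := by
    intro k _; ring
  rw [Finset.sum_congr rfl step1]
  rw [Finset.sum_range_succ' (fun k => coefA n α β N k *
        (Bf α N x * (poch (-(x+1)) k - poch (-x) k) + Df β N x * (poch (-(x-1)) k - poch (-x) k))) n]
  have base : coefA n α β N 0 *
      (Bf α N x * (poch (-(x+1)) 0 - poch (-x) 0) + Df β N x * (poch (-(x-1)) 0 - poch (-x) 0)) = 0 := by
    rw [poch_zero, poch_zero, poch_zero]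
    ring
  rw [base, add_zero]
  have step2 : ∀ j ∈ Finset.range n,
      coefA n α β N (j+1) *
        (Bf α N x * (poch (-(x+1)) (j+1) - poch (-x) (j+1)) +
          Df β N x * (poch (-(x-1)) (j+1) - poch (-x) (j+1))) =
      coefA n α β N (j+1) * (((j:ℝ)+1)*((j:ℝ)+α+β+2)) * poch (-x) (j+1) +
        coefA n α β N j * (((n:ℝ)-j) * ((n:ℝ)+j+α+β+1)) * poch (-x) j := by
    intro j hj
    rw [Finset.mem_range] at hj
    rw [Lv α β N j x]
    rw [mul_add]
    congr 1
    · ring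
    · have hc := coefA_rec hj hn hα (β := β)
      calc coefA n α β N (j+1) * (((j:ℝ)+1)*((N:ℝ)-j)*((j:ℝ)+α+1) * poch (-x) j)
          = coefA n α β N (j+1) * (((j:ℝ)+1) * ((N:ℝ)-j) * (α+1+j)) * poch (-x) j := by ring
        _ = coefA n α β N j * (((n:ℝ)-j) * ((n:ℝ)+j+α+β+1)) * poch (-x) j := by rw [hc]
  rw [Finset.sum_congr rfl step2, Finset.sum_add_distrib]
  -- first piece: reindex back to range (n+1)
  have first : ∑ j ∈ Finset.range n, coefA n α β N (j+1) * (((j:ℝ)+1)*((j:ℝ)+α+β+2)) * poch (-x) (j+1)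
      = ∑ k ∈ Finset.range (n+1), coefA n α β N k * ((k:ℝ)*((k:ℝ)+α+β+1)) * poch (-x) k := by
    rw [Finset.sum_range_succ' (fun k => coefA n α β N k * ((k:ℝ)*((k:ℝ)+α+β+1)) * poch (-x) k) n]
    norm_num
    apply Finset.sum_congr rfl
    intro j _
    push_cast
    ring_nf
  rw [first]
  -- second piece: extend to range (n+1) since k = n term vanishes
  have second : ∑ j ∈ Finset.range n, coefA n α β N j * (((n:ℝ)-j) * ((n:ℝ)+j+α+β+1)) * poch (-x) j
      = ∑ k ∈ Finset.range (n+1), coefA n α β N k * (((n:ℝ)-k) * ((n:ℝ)+k+α+β+1)) * poch (-x) k := by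
    rw [Finset.sum_range_succ]
    norm_num
  rw [second, ← Finset.sum_add_distrib]
  apply Finset.sum_congr rfl
  intro k _
  ring

lemma coefA_fwd {n N j : ℕ} (hn1 : 1 ≤ n) (hj : j < n) (hn : n ≤ N) {α β : ℝ} (hα : -1 < α) :
    -((j:ℝ)+1) * coefA n α β N (j+1) =
      -((n:ℝ)*((n:ℝ)+α+β+1)/((α+1)*(N:ℝ))) * coefA (n-1) (α+1) (β+1) (N-1) j := by
  have hN1 : 1 ≤ N := le_trans hn1 hn
  have hcn : ((n-1 : ℕ) : ℝ) = (n:ℝ) - 1 := by rw [Nat.cast_sub hn1]; push_cast; ring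
  have hcN : ((N-1 : ℕ) : ℝ) = (N:ℝ) - 1 := by rw [Nat.cast_sub hN1]; push_cast; ring
  unfold coefA
  rw [hcn, hcN]
  rw [poch_succ' (-(n:ℝ)) j, poch_succ' ((n:ℝ)+α+β+1) j, poch_succ' (α+1) j,
    poch_succ' (-(N:ℝ)) j, Nat.factorial_succ]
  rw [show -(n:ℝ) + 1 = -((n:ℝ)-1) from by ring, show (n:ℝ)+α+β+1+1 = (n:ℝ)-1+(α+1)+(β+1)+1 from by ring,
    show -(N:ℝ)+1 = -((N:ℝ)-1) from by ring]
  set p1 := poch (-((n:ℝ)-1)) j with hp1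
  set p2 := poch ((n:ℝ)-1+(α+1)+(β+1)+1) j with hp2
  set p3 := poch (α+1+1) j with hp3
  set p4 := poch (-((N:ℝ)-1)) j with hp4
  have h1 : (j.factorial : ℝ) ≠ 0 := by positivity
  have h2 : p3 ≠ 0 := poch_ne_zero (by linarith) j
  have h3 : p4 ≠ 0 := by
    have := poch_neg_nat_ne_zero (N := N-1) (k := j) (by omega)
    rwa [hcN] at this
  have h4 : ((j:ℝ)+1) ≠ 0 := by positivity
  have h5 : (α+1) ≠ 0 := by intro hc; linarith
  have h6 : ((N:ℝ)) ≠ 0 := by positivity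
  field_simp
  push_cast
  ring

lemma hahnQ_fwd {n N : ℕ} (hn1 : 1 ≤ n) (hn : n ≤ N) {α β : ℝ} (hα : -1 < α) (x : ℝ) :
    hahnQ n (x+1) α β N - hahnQ n x α β N =
      -((n:ℝ)*((n:ℝ)+α+β+1)/((α+1)*(N:ℝ))) * hahnQ (n-1) x (α+1) (β+1) (N-1) := by
  rw [hahnQ_eq n (x+1), hahnQ_eq n x, hahnQ_eq (n-1) x]
  rw [← Finset.sum_sub_distrib]
  have e : ∀ k ∈ Finset.range (n+1),
      coefA n α β N k * poch (-(x+1)) k - coefA n α β N k * poch (-x) k =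
      coefA n α β N k * (poch (-(x+1)) k - poch (-x) k) := by intro k _; ring
  rw [Finset.sum_congr rfl e]
  rw [Finset.sum_range_succ' (fun k => coefA n α β N k * (poch (-(x+1)) k - poch (-x) k)) n]
  have base : coefA n α β N 0 * (poch (-(x+1)) 0 - poch (-x) 0) = 0 := by
    rw [poch_zero, poch_zero]; ring
  rw [base, add_zero]
  have hr : n - 1 + 1 = n := by omega
  rw [Finset.mul_sum]
  rw [hr]
  apply Finset.sum_congr rfl
  intro j hj
  rw [Finset.mem_range] at hj
  rw [poch_diff_up x j]
  have hc := coefA_fwd hn1 hj hn (β := β) hα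
  calc coefA n α β N (j+1) * (-((j:ℝ)+1) * poch (-x) j)
      = (-((j:ℝ)+1) * coefA n α β N (j+1)) * poch (-x) j := by ring
    _ = (-((n:ℝ)*((n:ℝ)+α+β+1)/((α+1)*(N:ℝ))) * coefA (n-1) (α+1) (β+1) (N-1) j) * poch (-x) j := by
        rw [hc]
    _ = -((n:ℝ)*((n:ℝ)+α+β+1)/((α+1)*(N:ℝ))) * (coefA (n-1) (α+1) (β+1) (N-1) j * poch (-x) j) := by
        ring

lemma sum_by_parts (α β : ℝ) (N : ℕ) (f g : ℕ → ℝ) :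
    ∑ x ∈ Finset.range (N+1), Wt α β N x * g x *
        (Bf α N (x:ℝ) * (f (x+1) - f x) + Df β N (x:ℝ) * (f (x-1) - f x)) =
      ∑ x ∈ Finset.range N, (Wt α β N x * Bf α N (x:ℝ)) * (f (x+1) - f x) * (g x - g (x+1)) := by
  have split : ∀ x ∈ Finset.range (N+1), Wt α β N x * g x *
        (Bf α N (x:ℝ) * (f (x+1) - f x) + Df β N (x:ℝ) * (f (x-1) - f x)) =
      (Wt α β N x * Bf α N (x:ℝ)) * (g x * (f (x+1) - f x)) +
        (Wt α β N x * Df β N (x:ℝ)) * (g x * (f (x-1) - f x)) := by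
    intro x _; ring
  rw [Finset.sum_congr rfl split, Finset.sum_add_distrib]
  have S1 : ∑ x ∈ Finset.range (N+1), (Wt α β N x * Bf α N (x:ℝ)) * (g x * (f (x+1) - f x)) =
      ∑ x ∈ Finset.range N, (Wt α β N x * Bf α N (x:ℝ)) * (g x * (f (x+1) - f x)) := by
    rw [Finset.sum_range_succ]
    have : Bf α N ((N:ℕ):ℝ) = 0 := by unfold Bf; simp
    rw [this]; simp
  have S2 : ∑ x ∈ Finset.range (N+1), (Wt α β N x * Df β N (x:ℝ)) * (g x * (f (x-1) - f x)) =
      ∑ x ∈ Finset.range N, (Wt α β N x * Bf α N (x:ℝ)) * (g (x+1) * (f x - f (x+1))) := by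
    rw [Finset.sum_range_succ' (fun x => (Wt α β N x * Df β N (x:ℝ)) * (g x * (f (x-1) - f x))) N]
    have z : (Wt α β N 0 * Df β N ((0:ℕ):ℝ)) * (g 0 * (f (0-1) - f 0)) = 0 := by
      have : Df β N ((0:ℕ):ℝ) = 0 := by unfold Df; simp
      rw [this]; ring
    rw [z, add_zero]
    apply Finset.sum_congr rfl
    intro x _
    have hp := pearson α β N x
    have hc : (((x+1:ℕ)):ℝ) = (x:ℝ)+1 := by push_cast; ring
    rw [hc, hp]
    have : (x+1) - 1 = x := by omega
    rw [this]
  rw [S1, S2, ← Finset.sum_add_distrib]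
  apply Finset.sum_congr rfl
  intro x _
  ring

lemma diffeq_nat {n N : ℕ} (hn : n ≤ N) {α β : ℝ} (hα : -1 < α) (x : ℕ) :
    Bf α N (x:ℝ) * (hahnQ n ((x+1:ℕ):ℝ) α β N - hahnQ n (x:ℝ) α β N) +
      Df β N (x:ℝ) * (hahnQ n ((x-1:ℕ):ℝ) α β N - hahnQ n (x:ℝ) α β N) =
    (n:ℝ)*((n:ℝ)+α+β+1) * hahnQ n (x:ℝ) α β N := by
  rcases x with _ | y
  · have h := hahnQ_diffeq hn hα (β := β) (0:ℝ)
    have hD' : Df β N (0:ℝ) = 0 := by unfold Df; ring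
    rw [hD', zero_mul, add_zero] at h
    have hD : Df β N ((0:ℕ):ℝ) = 0 := by unfold Df; norm_num
    rw [hD, zero_mul, add_zero]
    norm_num at h ⊢
    exact h
  · have h := hahnQ_diffeq hn hα (β := β) ((y:ℝ)+1)
    have e1 : (((y+1:ℕ)):ℝ) = (y:ℝ)+1 := by push_cast; ring
    have e2 : (((y+1+1:ℕ)):ℝ) = ((y:ℝ)+1)+1 := by push_cast; ring
    have e3 : (((y+1-1:ℕ)):ℝ) = ((y:ℝ)+1)-1 := by
      have : y+1-1 = y := by omega
      rw [this]; ring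
    rw [e1, e2, e3]
    exact h

lemma weighted_sum_L {n m N : ℕ} (hn : n ≤ N) {α β : ℝ} (hα : -1 < α) :
    ∑ x ∈ Finset.range (N+1), Wt α β N x * hahnQ m (x:ℝ) α β N *
        (Bf α N (x:ℝ) * (hahnQ n ((x+1:ℕ):ℝ) α β N - hahnQ n (x:ℝ) α β N) +
         Df β N (x:ℝ) * (hahnQ n ((x-1:ℕ):ℝ) α β N - hahnQ n (x:ℝ) α β N)) =
    (n:ℝ)*((n:ℝ)+α+β+1) *
      ∑ x ∈ Finset.range (N+1), Wt α β N x * hahnQ m (x:ℝ) α β N * hahnQ n (x:ℝ) α β N := by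
  rw [Finset.mul_sum]
  apply Finset.sum_congr rfl
  intro x _
  rw [diffeq_nat hn hα x]
  ring

lemma ortho_ne {n m N : ℕ} (hn : n ≤ N) (hm : m ≤ N) (hne : m ≠ n) {α β : ℝ}
    (hα : -1 < α) (hβ : -1 < β) (hab : 0 < α+β+1) :
    ∑ x ∈ Finset.range (N+1), Wt α β N x * hahnQ m (x:ℝ) α β N * hahnQ n (x:ℝ) α β N = 0 := by
  set S := ∑ x ∈ Finset.range (N+1), Wt α β N x * hahnQ m (x:ℝ) α β N * hahnQ n (x:ℝ) α β N with hS
  have h1 : (n:ℝ)*((n:ℝ)+α+β+1) * S =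
      ∑ x ∈ Finset.range N, (Wt α β N x * Bf α N (x:ℝ)) *
        (hahnQ n ((x+1:ℕ):ℝ) α β N - hahnQ n (x:ℝ) α β N) *
        (hahnQ m (x:ℝ) α β N - hahnQ m ((x+1:ℕ):ℝ) α β N) := by
    rw [← weighted_sum_L hn hα (m := m)]
    exact sum_by_parts α β N (fun x => hahnQ n (x:ℝ) α β N) (fun x => hahnQ m (x:ℝ) α β N)
  have h2 : (m:ℝ)*((m:ℝ)+α+β+1) * S =
      ∑ x ∈ Finset.range N, (Wt α β N x * Bf α N (x:ℝ)) *
        (hahnQ m ((x+1:ℕ):ℝ) α β N - hahnQ m (x:ℝ) α β N) *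
        (hahnQ n (x:ℝ) α β N - hahnQ n ((x+1:ℕ):ℝ) α β N) := by
    have hS' : S = ∑ x ∈ Finset.range (N+1), Wt α β N x * hahnQ n (x:ℝ) α β N * hahnQ m (x:ℝ) α β N := by
      rw [hS]; apply Finset.sum_congr rfl; intro x _; ring
    rw [hS', ← weighted_sum_L hm hα (m := n)]
    exact sum_by_parts α β N (fun x => hahnQ m (x:ℝ) α β N) (fun x => hahnQ n (x:ℝ) α β N)
  have heq : (n:ℝ)*((n:ℝ)+α+β+1) * S = (m:ℝ)*((m:ℝ)+α+β+1) * S := by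
    rw [h1, h2]
    apply Finset.sum_congr rfl
    intro x _
    ring
  have hner : ((n:ℝ) - m) * ((n:ℝ) + m + α + β + 1) ≠ 0 := by
    apply mul_ne_zero
    · have : (n:ℝ) ≠ (m:ℝ) := by exact_mod_cast (Ne.symm hne)
      intro hc
      apply this
      linarith
    · have h0n : (0:ℝ) ≤ n := Nat.cast_nonneg n
      have h0m : (0:ℝ) ≤ m := Nat.cast_nonneg m
      intro hc; linarith
  by_contra hSne
  apply hner
  have : ((n:ℝ)*((n:ℝ)+α+β+1) - (m:ℝ)*((m:ℝ)+α+β+1)) * S = 0 := by linarith [heq]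
  rcases mul_eq_zero.mp this with h | h
  · nlinarith [h]
  · exact absurd h hSne

lemma norm_rec {n N : ℕ} (hn1 : 1 ≤ n) (hn : n ≤ N) {α β : ℝ} (hα : -1 < α) (hβ : -1 < β) :
    ∑ x ∈ Finset.range (N+1), Wt α β N x * hahnQ n (x:ℝ) α β N * hahnQ n (x:ℝ) α β N =
      ((β+1)*((N:ℝ)+α+β+2)*(n:ℝ)*((n:ℝ)+α+β+1)/((α+1)*(α+β+2)*(α+β+3)*(N:ℝ))) *
        ∑ y ∈ Finset.range ((N-1)+1), Wt (α+1) (β+1) (N-1) y *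
          hahnQ (n-1) (y:ℝ) (α+1) (β+1) (N-1) * hahnQ (n-1) (y:ℝ) (α+1) (β+1) (N-1) := by
  have hN1 : 1 ≤ N := le_trans hn1 hn
  have hr : N - 1 + 1 = N := by omega
  have hα1 : (0:ℝ) < α + 1 := by linarith
  have hβ1 : (0:ℝ) < β + 1 := by linarith
  have hlam : (0:ℝ) < (n:ℝ)*((n:ℝ)+α+β+1) := by
    have : (1:ℝ) ≤ (n:ℝ) := by exact_mod_cast hn1
    have h2 : (0:ℝ) < (n:ℝ)+α+β+1 := by linarith
    nlinarith
  have key : (n:ℝ)*((n:ℝ)+α+β+1) *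
      (∑ x ∈ Finset.range (N+1), Wt α β N x * hahnQ n (x:ℝ) α β N * hahnQ n (x:ℝ) α β N) =
      ∑ x ∈ Finset.range N, (Wt α β N x * Bf α N (x:ℝ)) *
        (hahnQ n ((x+1:ℕ):ℝ) α β N - hahnQ n (x:ℝ) α β N) *
        (hahnQ n (x:ℝ) α β N - hahnQ n ((x+1:ℕ):ℝ) α β N) := by
    rw [← weighted_sum_L hn hα (m := n)]
    exact sum_by_parts α β N (fun x => hahnQ n (x:ℝ) α β N) (fun x => hahnQ n (x:ℝ) α β N)
  have step : ∀ x ∈ Finset.range N,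
      (Wt α β N x * Bf α N (x:ℝ)) *
        (hahnQ n ((x+1:ℕ):ℝ) α β N - hahnQ n (x:ℝ) α β N) *
        (hahnQ n (x:ℝ) α β N - hahnQ n ((x+1:ℕ):ℝ) α β N) =
      ((N:ℝ) * (α+1) * (β+1) * ((N:ℝ)+α+β+2) / ((α+β+2)*(α+β+3))) *
        ((n:ℝ)*((n:ℝ)+α+β+1)/((α+1)*(N:ℝ)))^2 *
        (Wt (α+1) (β+1) (N-1) x * hahnQ (n-1) (x:ℝ) (α+1) (β+1) (N-1) *
          hahnQ (n-1) (x:ℝ) (α+1) (β+1) (N-1)) := by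
    intro x hx
    rw [Finset.mem_range] at hx
    have hWB := Wt_Bf hN1 hx hα hβ
    have hfwd := hahnQ_fwd hn1 hn hα (β := β) (x:ℝ)
    have hc : (((x+1:ℕ)):ℝ) = (x:ℝ)+1 := by push_cast; ring
    have hfwd2 : hahnQ n (x:ℝ) α β N - hahnQ n ((x:ℝ)+1) α β N =
        ((n:ℝ)*((n:ℝ)+α+β+1)/((α+1)*(N:ℝ))) * hahnQ (n-1) (x:ℝ) (α+1) (β+1) (N-1) := by
      linear_combination (-1 : ℝ) * hfwd
    rw [hc, hfwd, hfwd2, hWB]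
    ring
  rw [Finset.sum_congr rfl step, ← Finset.mul_sum] at key
  rw [hr]
  have hrC : (β+1)*((N:ℝ)+α+β+2)*(n:ℝ)*((n:ℝ)+α+β+1)/((α+1)*(α+β+2)*(α+β+3)*(N:ℝ))
      = ((N:ℝ) * (α+1) * (β+1) * ((N:ℝ)+α+β+2) / ((α+β+2)*(α+β+3)) *
          ((n:ℝ)*((n:ℝ)+α+β+1)/((α+1)*(N:ℝ)))^2) / ((n:ℝ)*((n:ℝ)+α+β+1)) := by
    have hN0 : (0:ℝ) < (N:ℝ) := by exact_mod_cast hN1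
    have h2 : (0:ℝ) < α+β+2 := by linarith
    have h3 : (0:ℝ) < α+β+3 := by linarith
    have hB : (0:ℝ) < (α+1)*(α+β+2)*(α+β+3)*(N:ℝ) :=
      mul_pos (mul_pos (mul_pos hα1 h2) h3) hN0
    have hD : (0:ℝ) < ((α+β+2)*(α+β+3)) * (((α+1)*(N:ℝ))^2) * ((n:ℝ)*((n:ℝ)+α+β+1)) :=
      mul_pos (mul_pos (mul_pos h2 h3) (pow_pos (mul_pos hα1 hN0) 2)) hlam
    rw [div_pow, div_mul_div_comm, div_div]
    rw [div_eq_div_iff hB.ne' hD.ne']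
    ring
  rw [hrC, div_mul_eq_mul_div, eq_div_iff hlam.ne']
  linear_combination key

lemma hahnPi_zero {α β : ℝ} (hab : α + β + 1 ≠ 0) (N : ℕ) : hahnPi 0 α β N = 1 := by
  unfold hahnPi
  rw [poch_zero, poch_zero, poch_zero, poch_zero, poch_zero]
  norm_num
  exact hab

lemma hahnPi_ne_zero {n N : ℕ} (hn : n ≤ N) {α β : ℝ} (hα : -1 < α) (hβ : -1 < β)
    (hab : 0 < α + β + 1) : hahnPi n α β N ≠ 0 := by
  unfold hahnPi
  have h2n : (0:ℝ) < 2*(n:ℝ) + α + β + 1 := by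
    have : (0:ℝ) ≤ (n:ℝ) := Nat.cast_nonneg n
    linarith
  have hNab : (0:ℝ) < (N:ℝ) + α + β + 2 := by
    have : (0:ℝ) ≤ (N:ℝ) := Nat.cast_nonneg N
    linarith
  apply mul_ne_zero
  · apply div_ne_zero
    · apply mul_ne_zero
      apply mul_ne_zero
      apply mul_ne_zero
      · exact pow_ne_zero n (by norm_num)
      · exact poch_neg_nat_ne_zero hn
      · exact poch_ne_zero (by linarith) n
      · exact poch_ne_zero hab n
    · apply mul_ne_zero
      apply mul_ne_zero
      · positivity
      · exact poch_ne_zero hNab n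
      · exact poch_ne_zero (by linarith) n
  · exact div_ne_zero h2n.ne' hab.ne'

lemma pi_ratio {n N : ℕ} (hn1 : 1 ≤ n) (hn : n ≤ N) {α β : ℝ} (hα : -1 < α) (hβ : -1 < β)
    (hab : 0 < α + β + 1) :
    hahnPi (n-1) (α+1) (β+1) (N-1) =
      ((β+1)*((N:ℝ)+α+β+2)*(n:ℝ)*((n:ℝ)+α+β+1)/((α+1)*(α+β+2)*(α+β+3)*(N:ℝ))) *
        hahnPi n α β N := by
  have hN1 : 1 ≤ N := le_trans hn1 hn
  have hrn : n - 1 + 1 = n := by omega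
  have hrN : N - 1 + 1 = N := by omega
  have hcn : ((n-1 : ℕ) : ℝ) = (n:ℝ) - 1 := by rw [Nat.cast_sub hn1]; push_cast; ring
  have hcN : ((N-1 : ℕ) : ℝ) = (N:ℝ) - 1 := by rw [Nat.cast_sub hN1]; push_cast; ring
  have hn0 : (1:ℝ) ≤ (n:ℝ) := by exact_mod_cast hn1
  have hN0 : (1:ℝ) ≤ (N:ℝ) := by exact_mod_cast hN1
  -- relations
  have A1 : poch (-(N:ℝ)) n = (-(N:ℝ)) * poch (-((N:ℝ)-1)) (n-1) := by
    conv_lhs => rw [← hrn]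
    rw [poch_succ' (-(N:ℝ)) (n-1), show -(N:ℝ)+1 = -((N:ℝ)-1) from by ring]
  have A2 : poch (α+1) n = (α+1) * poch (α+2) (n-1) := by
    conv_lhs => rw [← hrn]
    rw [poch_succ' (α+1) (n-1), show (α+1)+1 = α+2 from by ring]
  have A3 : poch (β+1) n = (β+1) * poch (β+2) (n-1) := by
    conv_lhs => rw [← hrn]
    rw [poch_succ' (β+1) (n-1), show (β+1)+1 = β+2 from by ring]
  have A5 : poch ((N:ℝ)+α+β+2) n = ((N:ℝ)+α+β+2) * poch ((N:ℝ)+α+β+3) (n-1) := by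
    conv_lhs => rw [← hrn]
    rw [poch_succ' ((N:ℝ)+α+β+2) (n-1), show (N:ℝ)+α+β+2+1 = (N:ℝ)+α+β+3 from by ring]
  have A4 : (α+β+1)*(α+β+2)*poch (α+β+3) (n-1) = poch (α+β+1) n * (α+β+1+((n:ℝ)-1)+1) := by
    have u1 : poch (α+β+1) (n+1) = poch (α+β+1) n * (α+β+1+n) := poch_succ _ n
    have u2 : poch (α+β+1) (n+1) = (α+β+1) * poch (α+β+2) n := by
      rw [poch_succ' (α+β+1) n, show α+β+1+1 = α+β+2 from by ring]
    have u3 : poch (α+β+2) n = (α+β+2) * poch (α+β+3) (n-1) := by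
      conv_lhs => rw [← hrn]
      rw [poch_succ' (α+β+2) (n-1), show α+β+2+1 = α+β+3 from by ring]
    rw [u3] at u2
    rw [u2] at u1
    rw [show α+β+1+((n:ℝ)-1)+1 = α+β+1+n from by ring]
    linarith [u1]
  have A6 : ((n.factorial : ℕ) : ℝ) = (n:ℝ) * (((n-1).factorial : ℕ) : ℝ) := by
    conv_lhs => rw [← hrn]
    rw [Nat.factorial_succ]
    push_cast [hrn]
    ring
  have A7 : ((-1 : ℝ)) ^ n = (-1:ℝ)^(n-1) * (-1) := by
    conv_lhs => rw [← hrn]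
    rw [pow_succ]
  -- unfold and substitute
  unfold hahnPi
  rw [hcn, hcN]
  rw [show -((N:ℝ)-1) = -((N:ℝ)-1) from rfl]
  rw [show (α+1)+1 = α+2 from by ring, show (α+1)+(β+1)+1 = α+β+3 from by ring,
    show ((N:ℝ)-1)+(α+1)+(β+1)+2 = (N:ℝ)+α+β+3 from by ring,
    show (β+1)+1 = β+2 from by ring,
    show 2*((n:ℝ)-1)+(α+1)+(β+1)+1 = 2*(n:ℝ)+α+β+1 from by ring]
  rw [A1, A2, A3, A5, A6, A7]
  have A4' : poch (α+β+3) (n-1) = poch (α+β+1) n * (α+β+1+(n:ℝ)) / ((α+β+1)*(α+β+2)) := by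
    rw [eq_div_iff (mul_ne_zero hab.ne' (show (α+β+2) ≠ 0 by intro h; linarith))]
    rw [show α+β+1+((n:ℝ)-1)+1 = α+β+1+(n:ℝ) from by ring] at A4
    linarith [A4]
  rw [A4']
  have ne1 : (((n-1).factorial : ℕ) : ℝ) ≠ 0 := by positivity
  have ne2 : poch ((N:ℝ)+α+β+3) (n-1) ≠ 0 := poch_ne_zero (by linarith) (n-1)
  have ne3 : poch (β+2) (n-1) ≠ 0 := poch_ne_zero (by linarith) (n-1)
  have ne4 : (α+β+1) ≠ 0 := hab.ne'
  have ne5 : (α+β+2) ≠ 0 := by intro h; linarith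
  have ne6 : (α+β+3) ≠ 0 := by intro h; linarith
  have ne7 : (α+1) ≠ 0 := by intro h; linarith
  have ne8 : (β+1) ≠ 0 := by intro h; linarith
  have ne9 : ((N:ℝ)) ≠ 0 := by intro h; linarith
  have ne10 : ((n:ℝ)) ≠ 0 := by intro h; linarith
  have ne11 : (α+β+1+(n:ℝ)) ≠ 0 := by intro h; linarith
  have ne12 : ((N:ℝ)+α+β+2) ≠ 0 := by intro h; linarith
  field_simp
  ring

theorem hahn_norm : ∀ (n N : ℕ), n ≤ N → ∀ α β : ℝ, -1 < α → -1 < β → 0 < α+β+1 →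
    ∑ x ∈ Finset.range (N+1), Wt α β N x * hahnQ n (x:ℝ) α β N * hahnQ n (x:ℝ) α β N =
      1 / hahnPi n α β N := by
  intro n
  induction n with
  | zero =>
    intro N _ α β hα hβ hab
    have e : ∀ x ∈ Finset.range (N+1),
        Wt α β N x * hahnQ 0 (x:ℝ) α β N * hahnQ 0 (x:ℝ) α β N = Wt α β N x := by
      intro x _
      rw [hahnQ_zero]
      ring
    rw [Finset.sum_congr rfl e, Wt_sum α β N (by linarith), hahnPi_zero hab.ne' N]
    norm_num
  | succ k ih =>
    intro N hk1 α β hα hβ hab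
    have hn1 : 1 ≤ k + 1 := by omega
    rw [norm_rec hn1 hk1 hα hβ]
    have hk : k ≤ N - 1 := by omega
    have ihh := ih (N-1) hk (α+1) (β+1) (by linarith) (by linarith) (by linarith)
    have hidx : k + 1 - 1 = k := by omega
    rw [hidx, ihh]
    have hpr := pi_ratio hn1 hk1 hα hβ hab (N := N)
    rw [hidx] at hpr
    have hPne := hahnPi_ne_zero hk1 hα hβ hab
    have hPne' : hahnPi k (α+1) (β+1) (N-1) ≠ 0 := by
      apply hahnPi_ne_zero hk (by linarith) (by linarith) (by linarith)
    rw [hpr]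
    have hN1 : 1 ≤ N := le_trans hn1 hk1
    have hN0 : (0:ℝ) < (N:ℝ) := by exact_mod_cast hN1
    have hk0 : (0:ℝ) < ((k+1:ℕ):ℝ) := by
      have : 0 < k + 1 := Nat.succ_pos k
      exact_mod_cast this
    have h1 : (0:ℝ) < β+1 := by linarith
    have h2 : (0:ℝ) < (N:ℝ)+α+β+2 := by linarith
    have h3 : (0:ℝ) < ((k+1:ℕ):ℝ)+α+β+1 := by linarith
    have h4 : (0:ℝ) < α+1 := by linarith
    have h5 : (0:ℝ) < α+β+2 := by linarith
    have h6 : (0:ℝ) < α+β+3 := by linarith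
    have hrne : ((β+1)*((N:ℝ)+α+β+2)*((k+1:ℕ):ℝ)*(((k+1:ℕ):ℝ)+α+β+1)/((α+1)*(α+β+2)*(α+β+3)*(N:ℝ))) ≠ 0 := by
      apply ne_of_gt
      apply div_pos
      · exact mul_pos (mul_pos (mul_pos h1 h2) hk0) h3
      · exact mul_pos (mul_pos (mul_pos h4 h5) h6) hN0
    rw [one_div, one_div, mul_inv, ← mul_assoc, mul_inv_cancel₀ hrne, one_mul]

theorem hahn_ortho {n m N : ℕ} (hn : n ≤ N) (hm : m ≤ N) {α β : ℝ}
    (hα : -1 < α) (hβ : -1 < β) (hab : 0 < α+β+1) :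
    ∑ x ∈ Finset.range (N+1), hahnQ m (x:ℝ) α β N * hahnQ n (x:ℝ) α β N * Wt α β N x =
      (if m = n then (1:ℝ) else 0) / hahnPi n α β N := by
  rcases eq_or_ne m n with rfl | hne
  · rw [if_pos rfl]
    rw [← hahn_norm m N hn α β hα hβ hab]
    apply Finset.sum_congr rfl
    intro x _
    ring
  · rw [if_neg hne, zero_div]
    rw [← ortho_ne hn hm hne hα hβ hab]
    apply Finset.sum_congr rfl
    intro x _
    ring

theorem shifted_hahn_orthogonality_x (N : ℕ) (hN : 1 ≤ N) (α β : ℝ)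
    (hα : -1 < α) (hβ : -1 < β) (n m : ℕ) (hn : n ≤ N - 1) (hm : m ≤ N - 1) :
    ∑ x ∈ Finset.range (N + 1),
        hahnQ m ((x : ℝ) - 1) (α + 1) β (N - 1) *
            hahnQ n ((x : ℝ) - 1) (α + 1) β (N - 1) *
            (x : ℝ) * hahnWeight x α β N =
      (N : ℝ) * (α + 1) / (α + β + 2) *
        ((if m = n then (1 : ℝ) else 0) / hahnPi n (α + 1) β (N - 1)) := by
  have hrN : N - 1 + 1 = N := by omega
  have hab2 : (0:ℝ) < α + β + 2 := by linarith
  rw [Finset.sum_range_succ' (fun x => hahnQ m ((x : ℝ) - 1) (α + 1) β (N - 1) *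
        hahnQ n ((x : ℝ) - 1) (α + 1) β (N - 1) * (x : ℝ) * hahnWeight x α β N) N]
  have base : hahnQ m (((0:ℕ) : ℝ) - 1) (α + 1) β (N - 1) *
      hahnQ n (((0:ℕ) : ℝ) - 1) (α + 1) β (N - 1) * ((0:ℕ) : ℝ) * hahnWeight 0 α β N = 0 := by
    norm_num
  rw [base, add_zero]
  have step : ∀ y ∈ Finset.range N,
      hahnQ m (((y+1:ℕ) : ℝ) - 1) (α + 1) β (N - 1) *
        hahnQ n (((y+1:ℕ) : ℝ) - 1) (α + 1) β (N - 1) * ((y+1:ℕ) : ℝ) * hahnWeight (y+1) α β N =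
      ((N:ℝ) * (α + 1) / (α + β + 2)) *
        (hahnQ m ((y:ℕ) : ℝ) (α + 1) β (N - 1) * hahnQ n ((y:ℕ) : ℝ) (α + 1) β (N - 1) *
          Wt (α + 1) β (N - 1) y) := by
    intro y hy
    rw [Finset.mem_range] at hy
    have hc : (((y+1:ℕ)) : ℝ) = (y:ℝ) + 1 := by push_cast; ring
    have hc2 : (((y+1:ℕ)) : ℝ) - 1 = (y:ℝ) := by rw [hc]; ring
    rw [hc2]
    rw [hahnWeight_eq_Wt (by omega) hα hβ]
    have hws := Wt_shift hN hab2.ne' y (by omega)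
    calc hahnQ m ((y:ℕ) : ℝ) (α + 1) β (N - 1) * hahnQ n ((y:ℕ) : ℝ) (α + 1) β (N - 1) *
          ((y+1:ℕ) : ℝ) * Wt α β N (y+1)
        = hahnQ m ((y:ℕ) : ℝ) (α + 1) β (N - 1) * hahnQ n ((y:ℕ) : ℝ) (α + 1) β (N - 1) *
          (((y:ℝ) + 1) * Wt α β N (y+1)) := by rw [hc]; ring
      _ = hahnQ m ((y:ℕ) : ℝ) (α + 1) β (N - 1) * hahnQ n ((y:ℕ) : ℝ) (α + 1) β (N - 1) *
          ((N:ℝ) * (α + 1) / (α + β + 2) * Wt (α + 1) β (N - 1) y) := by rw [hws]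
      _ = ((N:ℝ) * (α + 1) / (α + β + 2)) *
          (hahnQ m ((y:ℕ) : ℝ) (α + 1) β (N - 1) * hahnQ n ((y:ℕ) : ℝ) (α + 1) β (N - 1) *
            Wt (α + 1) β (N - 1) y) := by ring
  rw [Finset.sum_congr rfl step, ← Finset.mul_sum]
  congr 1
  have := hahn_ortho (N := N-1) (n := n) (m := m) hn hm (by linarith : (-1:ℝ) < α+1) hβ
    (by linarith : (0:ℝ) < (α+1)+β+1)
  rw [← this, hrN]
end

section
/- For n ≥ 2, the Hahn polynomial with α = β = -1/2 and N = n² satisfies Q_n(2, -1/2, -1/2, n²) = -5/3. -/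
open Finset

theorem hahn_zaremba_example (n : ℕ) (hn : 2 ≤ n) :
    hahnQ n 2 (-(1 / 2)) (-(1 / 2)) (n ^ 2) = -(5 / 3) := by
  have hn2 : (2:ℝ) ≤ (n:ℝ) := by exact_mod_cast hn
  have hnpos : (0:ℝ) < n := by linarith
  have h3 : Finset.range 3 ⊆ Finset.range (n+1) := by
    apply Finset.range_subset_range.2; omega
  have hkey : hahnQ n 2 (-(1 / 2)) (-(1 / 2)) (n ^ 2) =
      ∑ k ∈ Finset.range 3,
        poch (-(n : ℝ)) k * poch ((n : ℝ) + (-(1/2)) + (-(1/2)) + 1) k * poch (-(2:ℝ)) k /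
          ((Nat.factorial k : ℝ) * poch ((-(1/2)) + 1) k * poch (-((n^2 : ℕ) : ℝ)) k) := by
    rw [hahnQ]
    refine (Finset.sum_subset h3 ?_).symm
    intro k _ hk
    have h2k : 2 ∈ Finset.range k := by
      simp only [Finset.mem_range] at hk ⊢; omega
    have : poch (-(2:ℝ)) k = 0 := by
      rw [poch]
      exact Finset.prod_eq_zero h2k (by norm_num)
    rw [this]; ring
  rw [hkey]
  rw [Finset.sum_range_succ, Finset.sum_range_succ, Finset.sum_range_succ,
    Finset.sum_range_zero]
  simp only [poch, Finset.prod_range_zero, Finset.prod_range_succ, Finset.prod_range_one,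
    Nat.factorial, Nat.cast_pow, Nat.cast_ofNat]
  push_cast
  have h1 : (n:ℝ)^2 ≠ 0 := by positivity
  have h2 : (n:ℝ)^2 - 1 ≠ 0 := by nlinarith
  have h4 : (n:ℝ)^2*6 - (n:ℝ)^4*6 ≠ 0 := by
    intro h; apply h2; nlinarith
  have e : ((n:ℝ)^2*6 - (n:ℝ)^4*6)⁻¹ * ((n:ℝ)^2*6 - (n:ℝ)^4*6) = 1 := inv_mul_cancel₀ h4
  field_simp [h4]
  have e2 : (1 - (n:ℝ)^2)⁻¹ * (1 - (n:ℝ)^2) = 1 := inv_mul_cancel₀ (by intro h; apply h2; linarith)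
  linear_combination (-24*(n:ℝ)^2) * e2
end

section
/- The Krawtchouk polynomials k_n(x,p,N) = Σ_{k=0}^n ((-n)_k(-x)_k)/(k!(-N)_k) (1/p)^k are orthogonal with respect to the binomial weights: for 0 ≤ m, n ≤ N, Σ_{x=0}^N C(N,x) p^x (1-p)^{N-x} k_m(x,p,N) k_n(x,p,N) = δ_{mn} (q/p)^n / C(N,n), where q = 1-p. -/
open Finset

lemma poch_neg_nat (x k : ℕ) : poch (-(x:ℝ)) k = (-1)^k * (x.descFactorial k : ℝ) := by
  induction k with
  | zero => simp [poch]
  | succ k ih =>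
      rw [poch, Finset.prod_range_succ, ← poch, ih, Nat.descFactorial_succ]
      rcases Nat.lt_or_ge k x with h | h
      · push_cast [Nat.cast_sub h.le]
        ring
      · rw [Nat.sub_eq_zero_of_le h]
        rcases eq_or_lt_of_le h with h' | h'
        · rw [← h']
          push_cast
          ring
        · rw [Nat.descFactorial_eq_zero_iff_lt.2 h']
          push_cast
          ring

lemma poch_neg_nat' (x k : ℕ) : poch (-(x:ℝ)) k = (-1)^k * (k.factorial : ℝ) * (x.choose k : ℝ) := by
  rw [poch_neg_nat, Nat.descFactorial_eq_factorial_mul_choose]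
  push_cast; ring




noncomputable def Pp (p : ℝ) (N x : ℕ) : Polynomial ℝ :=
  (Polynomial.C (-(1/p)) * Polynomial.X + (1 + Polynomial.X))^x * (1 + Polynomial.X)^(N-x)

lemma coeffP (p : ℝ) (N x n : ℕ) (hx : x ≤ N) :
    (Pp p N x).coeff n =
      ∑ k ∈ Finset.range (n+1),
        (x.choose k : ℝ) * (-(1/p))^k * ((N-k).choose (n-k) : ℝ) := by
  rw [Pp, add_pow, Finset.sum_mul]
  have hterm : ∀ k ∈ Finset.range (x+1),
      (Polynomial.C (-(1/p)) * Polynomial.X)^k * (1+Polynomial.X)^(x-k) * (x.choose k : Polynomial ℝ)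
        * (1+Polynomial.X)^(N-x)
      = Polynomial.C ((-(1/p))^k * (x.choose k : ℝ)) * ((1+Polynomial.X)^(N-k) * Polynomial.X^k) := by
    intro k hk
    have hkx : k ≤ x := Nat.lt_succ_iff.mp (Finset.mem_range.mp hk)
    have h2 : N - k = (x - k) + (N - x) := by omega
    rw [h2, pow_add, map_mul, map_pow, Polynomial.C_eq_natCast]
    ring
  rw [Finset.sum_congr rfl hterm, Polynomial.finset_sum_coeff]
  have hco : ∀ k ∈ Finset.range (x+1),
      (Polynomial.C ((-(1/p))^k * (x.choose k : ℝ)) * ((1+Polynomial.X)^(N-k) * Polynomial.X^k)).coeff n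
      = if k ≤ n then (x.choose k : ℝ) * (-(1/p))^k * ((N-k).choose (n-k) : ℝ) else 0 := by
    intro k hk
    rw [mul_assoc, Polynomial.coeff_C_mul, Polynomial.coeff_mul_X_pow', Polynomial.coeff_one_add_X_pow]
    split_ifs with h
    · ring
    · ring
  rw [Finset.sum_congr rfl hco]
  have hite : ∀ k, (if k ≤ n then (x.choose k : ℝ) * (-(1/p))^k * ((N-k).choose (n-k) : ℝ) else 0)
      = if k ∈ Finset.range (n+1) then (x.choose k : ℝ) * (-(1/p))^k * ((N-k).choose (n-k) : ℝ) else 0 := by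
    intro k; simp [Nat.lt_succ_iff]
  rw [Finset.sum_congr rfl (fun k _ => hite k), Finset.sum_ite_mem]
  apply Finset.sum_subset
  · intro k hk
    simp only [Finset.mem_inter, Finset.mem_range] at hk ⊢
    omega
  · intro k hk hk2
    have hxk : x < k := by
      simp only [Finset.mem_inter, Finset.mem_range] at hk hk2
      omega
    simp [Nat.choose_eq_zero_of_lt hxk]



lemma kraw_eq (p : ℝ) (hp : p ≠ 0) (N x n : ℕ) (hn : n ≤ N) :
    (N.choose n : ℝ) * kraw n (x:ℝ) p N =
      ∑ k ∈ Finset.range (n+1),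
        (x.choose k : ℝ) * (-(1/p))^k * ((N-k).choose (n-k) : ℝ) := by
  rw [kraw, Finset.mul_sum]
  apply Finset.sum_congr rfl
  intro k hk
  have hkn : k ≤ n := Nat.lt_succ_iff.mp (Finset.mem_range.mp hk)
  rw [poch_neg_nat' n k, poch_neg_nat' x k, poch_neg_nat' N k]
  have hNk : (N.choose k : ℝ) ≠ 0 := by
    have := Nat.choose_pos (hkn.trans hn)
    positivity
  have hfk : (k.factorial : ℝ) ≠ 0 := by positivity
  have hneg : ((-1 : ℝ))^k ≠ 0 := by positivity
  have key : (N.choose n : ℝ) * (n.choose k : ℝ) = (N.choose k : ℝ) * ((N-k).choose (n-k) : ℝ) := by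
    exact_mod_cast congrArg (Nat.cast : ℕ → ℝ) (Nat.choose_mul (n := N) hkn)
  rw [neg_pow]
  have h1 : ((-1:ℝ))^(k*2) = 1 := by rw [mul_comm, pow_mul]; norm_num
  field_simp
  ring_nf
  linear_combination ((x.choose k : ℝ) * p⁻¹^k * (-1:ℝ)^k) * key




lemma degP (p : ℝ) (N x : ℕ) (hx : x ≤ N) : (Pp p N x).natDegree < N + 1 := by
  have h1 : (Polynomial.C (-(1/p)) * Polynomial.X + (1 + Polynomial.X) : Polynomial ℝ).natDegree ≤ 1 := by
    apply Polynomial.natDegree_add_le_of_degree_le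
    · exact (Polynomial.natDegree_C_mul_le _ _).trans (by simp)
    · apply Polynomial.natDegree_add_le_of_degree_le <;> simp
  have h2 : ((1 + Polynomial.X : Polynomial ℝ)).natDegree ≤ 1 := by
    apply Polynomial.natDegree_add_le_of_degree_le <;> simp
  have := Polynomial.natDegree_mul_le (p := (Polynomial.C (-(1/p)) * Polynomial.X + (1 + Polynomial.X))^x)
    (q := (1 + Polynomial.X : Polynomial ℝ)^(N-x))
  have hx1 := Polynomial.natDegree_pow_le_of_le x h1
  have hx2 := Polynomial.natDegree_pow_le_of_le (N-x) h2
  rw [Pp]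
  omega

lemma combineC (p A1 B1 c1 : ℝ) (e1 : A1 + B1 = 1)
    (e2 : A1 * (-(1/p)) + (A1 + B1) = c1) :
    Polynomial.C A1 * (Polynomial.C (-(1/p)) * Polynomial.X + (1 + Polynomial.X))
      + Polynomial.C B1 * (1 + Polynomial.X)
      = 1 + Polynomial.C c1 * Polynomial.X := by
  have h : Polynomial.C A1 * (Polynomial.C (-(1/p)) * Polynomial.X + (1 + Polynomial.X))
      + Polynomial.C B1 * (1 + Polynomial.X)
      = Polynomial.C (A1 + B1) + Polynomial.C (A1 * (-(1/p)) + (A1 + B1)) * Polynomial.X := by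
    simp only [map_add, map_mul]
    ring
  rw [h, e2, e1, map_one]

lemma sum_eval (p : ℝ) (hp : p ≠ 0) (N : ℕ) (s : ℝ) :
    (∑ x ∈ Finset.range (N+1),
      Polynomial.C ((N.choose x : ℝ) * p^x * (1-p)^(N-x) * Polynomial.eval s (Pp p N x)) * Pp p N x)
      = (1 + Polynomial.C (((1-p)/p) * s) * Polynomial.X)^N := by
  have hevalA : Polynomial.eval s (Polynomial.C (-(1/p)) * Polynomial.X + (1 + Polynomial.X)) 
      = -(1/p) * s + (1 + s) := by simp
  have e1 : p * (-(1/p) * s + (1 + s)) + (1-p) * (1 + s) = 1 := by field_simp; ring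
  have e2 : (p * (-(1/p) * s + (1 + s))) * (-(1/p))
      + ((p * (-(1/p) * s + (1 + s))) + (1-p) * (1 + s)) = ((1-p)/p) * s := by field_simp; ring
  have hsum := combineC p _ _ _ e1 e2
  have hterm : ∀ x ∈ Finset.range (N+1),
      Polynomial.C ((N.choose x : ℝ) * p^x * (1-p)^(N-x) * Polynomial.eval s (Pp p N x)) * Pp p N x
      = (Polynomial.C (p * (-(1/p) * s + (1 + s))) * (Polynomial.C (-(1/p)) * Polynomial.X + (1 + Polynomial.X)))^x
        * (Polynomial.C ((1-p) * (1 + s)) * (1 + Polynomial.X))^(N-x) * (N.choose x : Polynomial ℝ) := by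
    intro x hx
    rw [Pp, Polynomial.eval_mul, Polynomial.eval_pow, Polynomial.eval_pow, hevalA]
    simp only [mul_pow, ← Polynomial.C_pow, Polynomial.eval_add, Polynomial.eval_one,
      Polynomial.eval_X, Polynomial.C_eq_natCast]
    push_cast [map_mul, map_pow]
    rw [Polynomial.C_eq_natCast]
    ring
  rw [Finset.sum_congr rfl hterm, ← add_pow, hsum]

lemma coeff_one_add_CX (a : ℝ) (N n : ℕ) :
    ((1 + Polynomial.C a * Polynomial.X)^N).coeff n
      = (N.choose n : ℝ) * a^n := by
  rw [add_comm, add_pow, Polynomial.finset_sum_coeff]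
  have hterm : ∀ k ∈ Finset.range (N+1),
      ((Polynomial.C a * Polynomial.X)^k * (1:Polynomial ℝ)^(N-k) * (N.choose k : Polynomial ℝ)).coeff n
      = if n = k then (N.choose k : ℝ) * a^k else 0 := by
    intro k hk
    rw [one_pow, mul_one, mul_pow, ← Polynomial.C_pow]
    have h2 : (Polynomial.C (a^k) * Polynomial.X^k * ((N.choose k : ℕ) : Polynomial ℝ))
        = Polynomial.C ((N.choose k : ℝ) * a^k) * Polynomial.X^k := by
      rw [map_mul, Polynomial.C_eq_natCast]
      ring
    rw [h2, Polynomial.coeff_C_mul, Polynomial.coeff_X_pow]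
    split_ifs with h
    · ring
    · ring
  rw [Finset.sum_congr rfl hterm, Finset.sum_ite_eq]
  split_ifs with h
  · rfl
  · rw [Nat.choose_eq_zero_of_lt (by simpa using h)]
    simp


theorem krawtchouk_orthogonality (N : ℕ) (hN : 0 < N) (p : ℝ)
    (hp : p ∈ Set.Ioo (0 : ℝ) 1) (n m : ℕ) (hn : n ≤ N) (hm : m ≤ N) :
    ∑ x ∈ Finset.range (N + 1),
        (N.choose x : ℝ) * p ^ x * (1 - p) ^ (N - x) *
          kraw m (x : ℝ) p N * kraw n (x : ℝ) p N =
      (if m = n then (1 : ℝ) else 0) * ((1 - p) / p) ^ n / (N.choose n : ℝ) := by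
  obtain ⟨hp0, hp1⟩ := hp
  have hpne : p ≠ 0 := ne_of_gt hp0
  set c : ℝ := (1-p)/p with hc
  set w : ℕ → ℝ := fun x => (N.choose x : ℝ) * p ^ x * (1 - p) ^ (N - x) with hw
  set b : ℕ → ℝ := fun m => ∑ x ∈ Finset.range (N+1), w x * (Pp p N x).coeff m * (Pp p N x).coeff n
    with hb
  -- step 1: pointwise identity in s
  have hpt : ∀ s : ℝ, ∑ x ∈ Finset.range (N+1), w x * Polynomial.eval s (Pp p N x) * (Pp p N x).coeff n
      = (N.choose n : ℝ) * (c*s)^n := by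
    intro s
    have := congrArg (fun q => Polynomial.coeff q n) (sum_eval p hpne N s)
    simp only [Polynomial.finset_sum_coeff, Polynomial.coeff_C_mul] at this
    rw [this, coeff_one_add_CX, mul_pow]
  -- step 2: as polynomials in s
  have hL : ∀ s : ℝ,
      Polynomial.eval s (∑ m ∈ Finset.range (N+1), Polynomial.C (b m) * Polynomial.X^m)
      = Polynomial.eval s (Polynomial.C ((N.choose n : ℝ) * c^n) * Polynomial.X^n) := by
    intro s
    simp only [Polynomial.eval_finset_sum, Polynomial.eval_mul, Polynomial.eval_C,
      Polynomial.eval_pow, Polynomial.eval_X]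
    rw [hb]
    have : ∀ mm, (∑ x ∈ Finset.range (N+1), w x * (Pp p N x).coeff mm * (Pp p N x).coeff n) * s^mm
        = ∑ x ∈ Finset.range (N+1), w x * ((Pp p N x).coeff mm * s^mm) * (Pp p N x).coeff n := by
      intro mm; rw [Finset.sum_mul]; apply Finset.sum_congr rfl; intro x _; ring
    simp only [this]
    rw [Finset.sum_comm]
    have hev : ∀ x ∈ Finset.range (N+1),
        (∑ mm ∈ Finset.range (N+1), w x * ((Pp p N x).coeff mm * s^mm) * (Pp p N x).coeff n)
        = w x * Polynomial.eval s (Pp p N x) * (Pp p N x).coeff n := by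
      intro x hx
      have hxN : x ≤ N := Nat.lt_succ_iff.mp (Finset.mem_range.mp hx)
      rw [Polynomial.eval_eq_sum_range' (degP p N x hxN), Finset.mul_sum, Finset.sum_mul]
    rw [Finset.sum_congr rfl hev, hpt s, mul_pow]
    ring
  have hpoly := Polynomial.funext hL
  -- step 3: extract coefficient m
  have hbm := congrArg (fun q => Polynomial.coeff q m) hpoly
  simp only [Polynomial.finset_sum_coeff, Polynomial.coeff_C_mul, Polynomial.coeff_X_pow] at hbm
  have hbm' : b m = (N.choose n : ℝ) * c^n * (if m = n then (1:ℝ) else 0) := by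
    rw [← hbm]
    rw [Finset.sum_eq_single m]
    · simp
    · intro j _ hj; simp [Ne.symm hj]
    · intro hmem; exact absurd (Finset.mem_range.mpr (Nat.lt_succ_of_le hm)) hmem
  -- step 4: relate b m to the kraw sum
  have hbk : b m = (N.choose m : ℝ) * (N.choose n : ℝ) *
      ∑ x ∈ Finset.range (N + 1), w x * kraw m (x : ℝ) p N * kraw n (x : ℝ) p N := by
    rw [hb, Finset.mul_sum]
    apply Finset.sum_congr rfl
    intro x hx
    have hxN : x ≤ N := Nat.lt_succ_iff.mp (Finset.mem_range.mp hx)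
    rw [coeffP p N x m hxN, coeffP p N x n hxN, ← kraw_eq p hpne N x m hm, ← kraw_eq p hpne N x n hn]
    ring
  have hNm : (N.choose m : ℝ) ≠ 0 := by have := Nat.choose_pos hm; positivity
  have hNn : (N.choose n : ℝ) ≠ 0 := by have := Nat.choose_pos hn; positivity
  rw [hbm'] at hbk
  rw [eq_div_iff hNn]
  rcases eq_or_ne m n with h | h
  · subst h
    simp only [eq_self_iff_true, if_true, if_pos rfl, mul_one, one_mul] at hbk ⊢
    have h2 : (N.choose m : ℝ) * ((N.choose m : ℝ) *
        ∑ x ∈ Finset.range (N + 1), w x * kraw m (x : ℝ) p N * kraw m (x : ℝ) p N)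
        = (N.choose m : ℝ) * c^m := by linear_combination -hbk
    have h3 := mul_left_cancel₀ hNm h2
    linear_combination h3
  · simp only [if_neg h, mul_zero, zero_mul] at hbk ⊢
    have h0 : (∑ x ∈ Finset.range (N + 1), w x * kraw m (x : ℝ) p N * kraw n (x : ℝ) p N) = 0 := by
      rcases mul_eq_zero.mp hbk.symm with h1 | h1
      · exact absurd h1 (mul_ne_zero hNm hNn)
      · exact h1
    rw [h0, zero_mul]
end

section
/- Let p ∈ (0,1), q = 1-p, and n ≤ N/2 + 1. Then the nth Krawtchouk polynomial satisfies for all real x ∈ [0,N]: |k_n(x,p,N)| ≤ max{1, (q/p)^n}, and moreover max{1,(q/p)^n} = max{|k_n(0,p,N)|, |k_n(N,p,N)|}. -/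
open Finset

set_option maxHeartbeats 1000000

namespace KrawAux

lemma poch_zero (a : ℝ) : poch a 0 = 1 := by simp [poch]

lemma poch_succ (a : ℝ) (k : ℕ) : poch a (k+1) = poch a k * (a + k) :=
  Finset.prod_range_succ _ _

lemma poch_succ' (a : ℝ) (k : ℕ) : poch a (k+1) = a * poch (a+1) k := by
  unfold poch
  rw [Finset.prod_range_succ']
  rw [mul_comm]
  congr 1
  · push_cast; ring
  · apply Finset.prod_congr rfl
    intro i _
    push_cast; ring

/-- poch (-N) k is nonzero when k ≤ N. -/
lemma poch_neg_nat_ne_zero {N k : ℕ} (h : k ≤ N) : poch (-(N:ℝ)) k ≠ 0 := by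
  unfold poch
  rw [Finset.prod_ne_zero_iff]
  intro i hi
  rw [Finset.mem_range] at hi
  have : (i:ℝ) < (N:ℝ) := by exact_mod_cast lt_of_lt_of_le hi h
  intro hcon
  nlinarith

/-- poch (-n) k = (-1)^k k! C(n,k) for k ≤ n. -/
lemma poch_neg_nat_eq {n : ℕ} : ∀ {k : ℕ}, k ≤ n →
    poch (-(n:ℝ)) k = (-1)^k * (Nat.factorial k : ℝ) * (n.choose k : ℝ) := by
  intro k
  induction k with
  | zero => intro _; simp [poch_zero]
  | succ k ih =>
    intro hk
    have hk' : k ≤ n := le_of_lt (Nat.lt_of_succ_le hk)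
    rw [poch_succ, ih hk']
    have hch : (n.choose (k+1) : ℝ) * (k+1) = (n.choose k : ℝ) * ((n:ℝ) - k) := by
      have := Nat.choose_succ_right_eq n k
      have hcast : ((n - k : ℕ) : ℝ) = (n:ℝ) - (k:ℝ) := by
        have : k ≤ n := hk'
        push_cast [Nat.cast_sub this]; ring
      calc (n.choose (k+1) : ℝ) * (k+1) = ((n.choose (k+1) * (k+1) : ℕ) : ℝ) := by push_cast; ring
        _ = ((n.choose k * (n - k) : ℕ) : ℝ) := by rw [this]
        _ = (n.choose k : ℝ) * ((n:ℝ) - k) := by push_cast [Nat.cast_sub hk']; ring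
    have hfac : (Nat.factorial (k+1) : ℝ) = (k+1) * (Nat.factorial k : ℝ) := by
      push_cast [Nat.factorial_succ]; ring
    rw [hfac]
    have : (-(n:ℝ) + k) = -((n:ℝ) - k) := by ring
    rw [this]
    rw [pow_succ]
    linear_combination ((-1:ℝ)^k * (Nat.factorial k : ℝ)) * hch

lemma kraw_at_zero (n N : ℕ) (p : ℝ) : kraw n 0 p N = 1 := by
  unfold kraw
  rw [Finset.sum_range_succ']
  have h0 : poch (-(n:ℝ)) 0 * poch (-(0:ℝ)) 0 / ((Nat.factorial 0 : ℝ) * poch (-(N:ℝ)) 0) * (1/p)^0 = 1 := by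
    simp [poch_zero]
  rw [h0]
  have : ∀ k ∈ Finset.range n, poch (-(n:ℝ)) (k+1) * poch (-(0:ℝ)) (k+1) / ((Nat.factorial (k+1) : ℝ) * poch (-(N:ℝ)) (k+1)) * (1/p)^(k+1) = 0 := by
    intro k _
    have : poch (-(0:ℝ)) (k+1) = 0 := by
      rw [poch_succ']
      simp
    rw [this]
    ring
  rw [Finset.sum_congr rfl this]
  simp

lemma kraw_at_N {n N : ℕ} (h : n ≤ N) {p : ℝ} (hp : p ≠ 0) :
    kraw n (N:ℝ) p N = ((p-1)/p)^n := by
  unfold kraw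
  have hterm : ∀ k ∈ Finset.range (n+1),
      poch (-(n:ℝ)) k * poch (-(N:ℝ)) k / ((Nat.factorial k : ℝ) * poch (-(N:ℝ)) k) * (1/p)^k
      = (-(1/p))^k * (1:ℝ)^(n-k) * (n.choose k : ℝ) := by
    intro k hk
    rw [Finset.mem_range] at hk
    have hkn : k ≤ n := Nat.lt_succ_iff.mp hk
    have hne : poch (-(N:ℝ)) k ≠ 0 := poch_neg_nat_ne_zero (le_trans hkn h)
    have hfn : (Nat.factorial k : ℝ) ≠ 0 := by positivity
    have hcan : poch (-(n:ℝ)) k * poch (-(N:ℝ)) k / ((Nat.factorial k : ℝ) * poch (-(N:ℝ)) k)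
        = poch (-(n:ℝ)) k / (Nat.factorial k : ℝ) := by
      rw [mul_comm (Nat.factorial k : ℝ) _, mul_comm (poch (-(n:ℝ)) k) _]
      exact mul_div_mul_left _ _ hne
    rw [hcan, poch_neg_nat_eq hkn]
    field_simp
    ring
  rw [Finset.sum_congr rfl hterm, ← add_pow]
  congr 1
  field_simp
  ring

-- scalar core of relation E
lemma scalarE {n N k : ℕ} (hk : k ≤ n) (h : n ≤ N) :
    poch (-((n:ℝ)+1)) (k+1) / ((Nat.factorial (k+1) : ℝ) * poch (-((N:ℝ)+1)) (k+1))
    = poch (-(n:ℝ)) (k+1) / ((Nat.factorial (k+1) : ℝ) * poch (-(N:ℝ)) (k+1)) * (((N:ℝ) - k)/((N:ℝ)+1))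
      + poch (-(n:ℝ)) k / ((Nat.factorial k : ℝ) * poch (-(N:ℝ)) k) / ((N:ℝ)+1) := by
  have hn1 : poch (-((n:ℝ)+1)) (k+1) = (-((n:ℝ)+1)) * poch (-(n:ℝ)) k := by
    rw [poch_succ']; congr 1; congr 1; ring
  have hN1 : poch (-((N:ℝ)+1)) (k+1) = (-((N:ℝ)+1)) * poch (-(N:ℝ)) k := by
    rw [poch_succ']; congr 1; congr 1; ring
  have hnk : poch (-(n:ℝ)) (k+1) = poch (-(n:ℝ)) k * ((k:ℝ) - n) := by
    rw [poch_succ]; ring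
  have hNk : poch (-(N:ℝ)) (k+1) = poch (-(N:ℝ)) k * ((k:ℝ) - N) := by
    rw [poch_succ]; ring
  have hπN : poch (-(N:ℝ)) k ≠ 0 := poch_neg_nat_ne_zero (le_trans hk h)
  have hfk : (Nat.factorial k : ℝ) ≠ 0 := by positivity
  have hfk1 : (Nat.factorial (k+1) : ℝ) = ((k:ℝ)+1) * (Nat.factorial k : ℝ) := by
    push_cast [Nat.factorial_succ]; ring
  have hk1 : ((k:ℝ)+1) ≠ 0 := by positivity
  have hM : ((N:ℝ)+1) ≠ 0 := by positivity
  have hD : (((k:ℝ)+1) * (Nat.factorial k : ℝ) * ((N:ℝ)+1) * poch (-(N:ℝ)) k) ≠ 0 :=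
    mul_ne_zero (mul_ne_zero (mul_ne_zero hk1 hfk) hM) hπN
  have eL : poch (-((n:ℝ)+1)) (k+1) / ((Nat.factorial (k+1) : ℝ) * poch (-((N:ℝ)+1)) (k+1))
      = (((n:ℝ)+1) * poch (-(n:ℝ)) k) / (((k:ℝ)+1) * (Nat.factorial k : ℝ) * ((N:ℝ)+1) * poch (-(N:ℝ)) k) := by
    rw [hn1, hN1, hfk1]
    rw [div_eq_div_iff (by exact mul_ne_zero (mul_ne_zero hk1 hfk) (mul_ne_zero (neg_ne_zero.mpr hM) hπN)) hD]
    ring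
  have e2 : poch (-(n:ℝ)) k / ((Nat.factorial k : ℝ) * poch (-(N:ℝ)) k) / ((N:ℝ)+1)
      = (((k:ℝ)+1) * poch (-(n:ℝ)) k) / (((k:ℝ)+1) * (Nat.factorial k : ℝ) * ((N:ℝ)+1) * poch (-(N:ℝ)) k) := by
    rw [div_div]
    rw [div_eq_div_iff (by exact mul_ne_zero (mul_ne_zero hfk hπN) hM) hD]
    ring
  rcases eq_or_lt_of_le (le_trans hk h) with hkN | hkN
  · -- k = N hence k = n = N
    have hkn : k = n := le_antisymm hk (by omega)
    have hn' : n = k := hkn.symm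
    have hN' : N = k := hkN.symm
    subst hn'; subst hN'
    rw [eL, e2, hnk]
    rw [sub_self, mul_zero, zero_div, zero_mul, zero_add]
  · have hkNne : ((k:ℝ) - N) ≠ 0 := by
      have : (k:ℝ) < N := by exact_mod_cast hkN
      intro hc; nlinarith
    have e1 : poch (-(n:ℝ)) (k+1) / ((Nat.factorial (k+1) : ℝ) * poch (-(N:ℝ)) (k+1)) * (((N:ℝ) - k)/((N:ℝ)+1))
        = (((n:ℝ)-k) * poch (-(n:ℝ)) k) / (((k:ℝ)+1) * (Nat.factorial k : ℝ) * ((N:ℝ)+1) * poch (-(N:ℝ)) k) := by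
      rw [hnk, hNk, hfk1, div_mul_div_comm]
      rw [div_eq_div_iff (by exact mul_ne_zero (mul_ne_zero (mul_ne_zero hk1 hfk) (mul_ne_zero hπN hkNne)) hM) hD]
      ring
    rw [eL, e1, e2, ← add_div]
    congr 1
    ring

lemma krawE (n N : ℕ) (h : n ≤ N) {p : ℝ} (hp : p ≠ 0) (x : ℝ) :
    kraw (n+1) x p (N+1) = (((N:ℝ)+1 - x)/((N:ℝ)+1)) * kraw n x p N
      - ((1-p)*x/(p*((N:ℝ)+1))) * kraw n (x-1) p N := by
  have hM : ((N:ℝ)+1) ≠ 0 := by positivity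
  set M : ℝ := (N:ℝ)+1 with hMdef
  set u : ℝ := 1/p with hu
  set A : ℕ → ℝ := fun k => poch (-(n:ℝ)) k / ((Nat.factorial k : ℝ) * poch (-(N:ℝ)) k) with hA
  set B : ℕ → ℝ := fun k => poch (-x) k with hB
  set P : ℕ → ℝ := fun k => poch (-(x-1)) k with hP
  have e1 : kraw n x p N = ∑ k ∈ Finset.range (n+1), A k * B k * u^k := by
    unfold kraw; exact Finset.sum_congr rfl (fun k _ => by dsimp [A, B]; ring)
  have e2 : kraw n (x-1) p N = ∑ k ∈ Finset.range (n+1), A k * P k * u^k := by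
    unfold kraw; exact Finset.sum_congr rfl (fun k _ => by dsimp [A, P]; ring)
  have e0 : kraw (n+1) x p (N+1) =
      ∑ k ∈ Finset.range (n+2), (poch (-((n:ℝ)+1)) k / ((Nat.factorial k : ℝ) * poch (-((N:ℝ)+1)) k)) * B k * u^k := by
    unfold kraw
    refine Finset.sum_congr rfl (fun k _ => ?_)
    have c1 : (-(↑(n+1):ℝ)) = -((n:ℝ)+1) := by push_cast; ring
    have c2 : (-(↑(N+1):ℝ)) = -((N:ℝ)+1) := by push_cast; ring
    rw [c1, c2]; dsimp [B]; ring
  rw [e0, e1, e2, Finset.mul_sum, Finset.mul_sum, ← Finset.sum_sub_distrib]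
  have key : ∀ k ∈ Finset.range (n+1),
      (M - x)/M * (A k * B k * u^k) - ((1-p)*x/(p*M)) * (A k * P k * u^k)
      = (A k * ((M-((k:ℕ):ℝ)-1+1)/M) * u^k) * B k + (A k / M * u^(k+1)) * B (k+1) := by
    intro k _
    have hB1 : B (k+1) = B k * ((k:ℝ) - x) := by dsimp [B]; rw [poch_succ]; ring
    have hxP : x * P k = -(B k * ((k:ℝ) - x)) := by
      dsimp [B, P]
      have : poch (-x) (k+1) = (-x) * poch (-x+1) k := poch_succ' _ _
      rw [poch_succ] at this
      have h2 : poch (-(x-1)) k = poch (-x+1) k := by congr 1; ring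
      rw [h2]
      nlinarith [this]
    have h1 : (M - x)/M * (A k * B k * u^k)
        = A k * ((M-((k:ℕ):ℝ)-1+1)/M) * u^k * B k + (A k/M*u^k) * (B k * ((k:ℝ) - x)) := by
      field_simp
      ring
    have h2 : ((1-p)*x/(p*M)) * (A k * P k * u^k)
        = -(((1-p)/(p*M)) * (A k * u^k) * (B k * ((k:ℝ) - x))) := by
      calc ((1-p)*x/(p*M)) * (A k * P k * u^k)
          = ((1-p)/(p*M)) * (A k * u^k) * (x * P k) := by ring
        _ = -(((1-p)/(p*M)) * (A k * u^k) * (B k * ((k:ℝ) - x))) := by rw [hxP]; ring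
    have h3 : (A k/M*u^k) + ((1-p)/(p*M))*(A k * u^k) = A k/M * u^(k+1) := by
      rw [hu]; field_simp; ring_nf; rw [mul_assoc (A k) p, mul_inv_cancel₀ hp, mul_one]
    rw [hB1, h1, h2]
    linear_combination (B k * ((k:ℝ) - x)) * h3
  rw [Finset.sum_congr rfl key, Finset.sum_add_distrib]
  -- LHS split
  rw [Finset.sum_range_succ' (fun k => (poch (-((n:ℝ)+1)) k / ((Nat.factorial k : ℝ) * poch (-((N:ℝ)+1)) k)) * B k * u^k) (n+1)]
  -- first RHS sum split
  rw [Finset.sum_range_succ' (fun k => (A k * ((M-((k:ℕ):ℝ)-1+1)/M) * u^k) * B k) n]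
  have hA0 : A 0 = 1 := by dsimp [A]; simp [poch_zero]
  have hC0 : (poch (-((n:ℝ)+1)) 0 / ((Nat.factorial 0 : ℝ) * poch (-((N:ℝ)+1)) 0)) * B 0 * u^0 = 1 := by
    dsimp [B]; simp [poch_zero]
  have hD0 : (A 0 * ((M-((0:ℕ):ℝ)-1+1)/M) * u^0) * B 0 = 1 := by
    dsimp [B]; rw [hA0]; simp [poch_zero]
    simp [hM]
  rw [hC0, hD0]
  -- extend the D-sum from range n to range (n+1) : extra term vanishes
  have hAn1 : A (n+1) = 0 := by
    dsimp [A]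
    have : poch (-(n:ℝ)) (n+1) = 0 := by
      rw [poch_succ]
      simp
    rw [this]; simp
  have hext : ∑ k ∈ Finset.range n, (A (k+1) * ((M-((k+1:ℕ):ℝ)-1+1)/M) * u^(k+1)) * B (k+1)
      = ∑ k ∈ Finset.range (n+1), (A (k+1) * ((M-((k+1:ℕ):ℝ)-1+1)/M) * u^(k+1)) * B (k+1) := by
    rw [Finset.sum_range_succ]
    rw [hAn1]
    ring
  rw [hext]
  have hptw : ∀ k ∈ Finset.range (n+1),
      poch (-((n:ℝ)+1)) (k+1) / ((Nat.factorial (k+1) : ℝ) * poch (-((N:ℝ)+1)) (k+1)) * B (k+1) * u^(k+1)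
      = A (k+1) * ((M-((k+1:ℕ):ℝ)-1+1)/M) * u^(k+1) * B (k+1) + A k / M * u^(k+1) * B (k+1) := by
    intro k hk
    rw [Finset.mem_range] at hk
    have hkn : k ≤ n := Nat.lt_succ_iff.mp hk
    have hsc := scalarE hkn h
    have hcast : (M-((k+1:ℕ):ℝ)-1+1) = (N:ℝ) - k := by rw [hMdef]; push_cast; ring
    rw [hcast]
    dsimp [A]
    rw [hMdef]
    linear_combination (B (k+1) * u^(k+1)) * hsc
  rw [Finset.sum_congr rfl hptw, Finset.sum_add_distrib]
  ring


lemma kraw_zero_n (x p : ℝ) (N : ℕ) : kraw 0 x p N = 1 := by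
  unfold kraw; simp [poch_zero]

lemma krawS : ∀ (n N : ℕ), n ≤ N → ∀ (p x : ℝ), p ≠ 0 → p ≠ 1 →
    kraw n x p N = ((p-1)/p)^n * kraw n ((N:ℝ)-x) (1-p) N := by
  intro n
  induction n with
  | zero => intro N _ p x _ _; rw [kraw_zero_n, kraw_zero_n]; simp
  | succ n ih =>
    intro N hnN p x hp hp1
    obtain ⟨N', rfl⟩ : ∃ N', N = N' + 1 := ⟨N - 1, by omega⟩
    have hnN' : n ≤ N' := by omega
    have hq : (1-p) ≠ 0 := sub_ne_zero.mpr (Ne.symm hp1)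
    have hM : ((N':ℝ)+1) ≠ 0 := by positivity
    rw [krawE n N' hnN' hp x, krawE n N' hnN' hq ((↑(N'+1):ℝ) - x)]
    have harg0 : (↑N' : ℝ) + 1 - ((↑(N'+1):ℝ) - x) = x := by push_cast; ring
    have harg1 : ((↑(N'+1):ℝ) - x) = (↑N' : ℝ) - (x-1) := by push_cast; ring
    have harg2 : ((↑(N'+1):ℝ) - x) - 1 = (↑N' : ℝ) - x := by push_cast; ring
    rw [harg0]
    rw [harg2]
    rw [harg1]
    have I1 := ih N' hnN' p (x-1) hp hp1
    have I2 := ih N' hnN' p x hp hp1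
    rw [I1, I2, pow_succ]
    have h1p : 1 - (1-p) = p := by ring
    rw [h1p]
    field_simp
    ring


lemma avg_pow {w : ℝ} (hw : 0 ≤ w) (n : ℕ) : ((1+w)/2)^n ≤ (1 + w^n)/2 := by
  induction n with
  | zero => norm_num
  | succ n ih =>
    have h1 : (0:ℝ) ≤ (1+w)/2 := by positivity
    have key : 0 ≤ (1 - w) * (1 - w^n) := by
      rcases le_total w 1 with h | h
      · have hwn : w^n ≤ 1 := pow_le_one₀ hw h
        nlinarith
      · have hwn : 1 ≤ w^n := one_le_pow₀ h
        nlinarith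
    have hstep : ((1+w)/2)^(n+1) ≤ (1+w^n)/2 * ((1+w)/2) := by
      rw [pow_succ]
      exact mul_le_mul_of_nonneg_right ih h1
    refine le_trans hstep ?_
    rw [pow_succ]
    nlinarith [pow_nonneg hw n]

lemma poch_neg_eq_prod (a : ℝ) (j : ℕ) :
    poch (-a) j = (-1)^j * ∏ i ∈ Finset.range j, (a - i) := by
  unfold poch
  rw [Finset.prod_congr rfl (fun i _ => by ring :
    ∀ i ∈ Finset.range j, (-a + (i:ℝ)) = (-1) * (a - (i:ℝ)))]
  rw [Finset.prod_mul_distrib, Finset.prod_const, Finset.card_range]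

lemma poch_negx_eq (x : ℝ) (k : ℕ) :
    poch (-x) (k+1) = -x * ((Nat.factorial k : ℝ) * ∏ i ∈ Finset.range k, (1 - x/((i:ℝ)+1))) := by
  rw [poch_succ']
  have h1 : poch (-x + 1) k = ∏ i ∈ Finset.range k, (((i:ℝ)+1) - x) := by
    unfold poch; exact Finset.prod_congr rfl (fun i _ => by ring)
  have h2 : ∏ i ∈ Finset.range k, (((i:ℝ)+1) - x)
      = (∏ i ∈ Finset.range k, ((i:ℝ)+1)) * ∏ i ∈ Finset.range k, (1 - x/((i:ℝ)+1)) := by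
    rw [← Finset.prod_mul_distrib]
    refine Finset.prod_congr rfl (fun i _ => ?_)
    have hi : ((i:ℝ)+1) ≠ 0 := by positivity
    field_simp
  have h3 : (∏ i ∈ Finset.range k, ((i:ℝ)+1)) = (Nat.factorial k : ℝ) := by
    exact_mod_cast Finset.prod_range_add_one_eq_factorial k
  rw [h1, h2, h3]

/-- Edge bound for `x ∈ [0,1]`, `3 ≤ n`, `2n ≤ N+2`. -/
lemma edge3 {n N : ℕ} (h3 : 3 ≤ n) (hNn : 2*n ≤ N + 2) {p : ℝ} (hp0 : 0 < p) (hp1 : p < 1)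
    {x : ℝ} (hx0 : 0 ≤ x) (hx1 : x ≤ 1) :
    |kraw n x p N| ≤ max 1 (((1-p)/p)^n) := by
  have hw0 : 0 ≤ (1-p)/p := div_nonneg (by linarith) (le_of_lt hp0)
  have hu0 : (0:ℝ) < 1/p := by positivity
  have huw : 1/p = 1 + (1-p)/p := by field_simp; ring
  have hnN : n + 1 ≤ N := by omega
  set P : ℕ → ℝ := fun k => ∏ i ∈ Finset.range k, (1 - x/((i:ℝ)+1)) with hPdef
  have hP0 : ∀ k, 0 ≤ P k := by
    intro k
    apply Finset.prod_nonneg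
    intro i _
    have h1 : x / ((i:ℝ)+1) ≤ 1 := by
      rw [div_le_one (by positivity)]
      have : (0:ℝ) ≤ (i:ℝ) := Nat.cast_nonneg i
      linarith
    linarith
  have hPstep : ∀ k, P k - P (k+1) = P k * (x/((k:ℝ)+1)) := by
    intro k
    have h := Finset.prod_range_succ (fun i => (1 - x/((i:ℝ)+1))) k
    have : P (k+1) = P k * (1 - x/((k:ℝ)+1)) := h
    rw [this]; ring
  set M : ℝ := max 1 ((1/p/2)^n) with hMdef
  have hM1 : (1:ℝ) ≤ M := le_max_left _ _
  have hterm : ∀ k ∈ Finset.range n,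
      poch (-(n:ℝ)) (k+1) * poch (-x) (k+1) /
        ((Nat.factorial (k+1) : ℝ) * poch (-(N:ℝ)) (k+1)) * (1/p)^(k+1)
      = -(x * ((1/p)^(k+1) * (∏ i ∈ Finset.range (k+1), ((n:ℝ) - i)) /
          (∏ i ∈ Finset.range (k+1), ((N:ℝ) - i))) * P k / ((k:ℝ)+1)) := by
    intro k hk
    rw [Finset.mem_range] at hk
    have hPNpos : (0:ℝ) < ∏ i ∈ Finset.range (k+1), ((N:ℝ) - i) := by
      apply Finset.prod_pos
      intro i hi
      rw [Finset.mem_range] at hi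
      have hiN : i < N := by omega
      have : (i:ℝ) < N := by exact_mod_cast hiN
      linarith
    have hfact : (Nat.factorial (k+1) : ℝ) = ((k:ℝ)+1) * (Nat.factorial k : ℝ) := by
      push_cast [Nat.factorial_succ]; ring
    rw [poch_neg_eq_prod (n:ℝ) (k+1), poch_neg_eq_prod (N:ℝ) (k+1), poch_negx_eq, hfact]
    have hm1 : ((-1:ℝ))^(k+1) ≠ 0 := pow_ne_zero _ (by norm_num)
    have hfk : (Nat.factorial k : ℝ) ≠ 0 := by positivity
    have hk1 : ((k:ℝ)+1) ≠ 0 := by positivity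
    have hPk : P k = ∏ i ∈ Finset.range k, (1 - x/((i:ℝ)+1)) := rfl
    rw [← hPk]
    have hbne : (∏ i ∈ Finset.range (k+1), ((N:ℝ) - i)) ≠ 0 := ne_of_gt hPNpos
    generalize hga : (∏ i ∈ Finset.range (k+1), ((n:ℝ) - i)) = a
    generalize hgb : (∏ i ∈ Finset.range (k+1), ((N:ℝ) - i)) = b at hbne ⊢
    generalize hgc : P k = c
    have hpne : p ≠ 0 := ne_of_gt hp0
    field_simp
  -- σ bound
  have hσ : ∀ k ∈ Finset.range n,
      0 ≤ (1/p)^(k+1) * (∏ i ∈ Finset.range (k+1), ((n:ℝ) - i)) /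
          (∏ i ∈ Finset.range (k+1), ((N:ℝ) - i))
      ∧ (1/p)^(k+1) * (∏ i ∈ Finset.range (k+1), ((n:ℝ) - i)) /
          (∏ i ∈ Finset.range (k+1), ((N:ℝ) - i)) ≤ 2 * M := by
    intro k hk
    rw [Finset.mem_range] at hk
    have hPNpos : (0:ℝ) < ∏ i ∈ Finset.range (k+1), ((N:ℝ) - i) := by
      apply Finset.prod_pos
      intro i hi
      rw [Finset.mem_range] at hi
      have hiN : i < N := by omega
      have : (i:ℝ) < N := by exact_mod_cast hiN
      linarith
    have hPn0 : (0:ℝ) ≤ ∏ i ∈ Finset.range (k+1), ((n:ℝ) - i) := by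
      apply Finset.prod_nonneg
      intro i hi
      rw [Finset.mem_range] at hi
      have hin : i < n := by omega
      have : (i:ℝ) < n := by exact_mod_cast hin
      linarith
    constructor
    · positivity
    · -- rewrite as product of ratios
      have hprod : (1/p)^(k+1) * (∏ i ∈ Finset.range (k+1), ((n:ℝ) - i)) /
          (∏ i ∈ Finset.range (k+1), ((N:ℝ) - i))
          = ∏ i ∈ Finset.range (k+1), ((1/p) * ((n:ℝ) - i) / ((N:ℝ) - i)) := by
        rw [Finset.prod_div_distrib, Finset.prod_mul_distrib, Finset.prod_const, Finset.card_range]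
      rw [hprod]
      set g : ℕ → ℝ := fun i => (1/p) * ((n:ℝ) - i) / ((N:ℝ) - i) with hgdef
      have hg0 : ∀ i < n, 0 ≤ g i := by
        intro i hi
        have hiN : i < N := by omega
        have h1 : (0:ℝ) < (N:ℝ) - i := by
          have : (i:ℝ) < N := by exact_mod_cast hiN
          linarith
        have h2 : (0:ℝ) ≤ (n:ℝ) - i := by
          have : (i:ℝ) < n := by exact_mod_cast hi
          linarith
        dsimp [g]; positivity
      have hgle : ∀ i, 2 ≤ i → i < n → g i ≤ 1/p/2 := by
        intro i h2i hin
        have hiN : i < N := by omega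
        have h1 : (0:ℝ) < (N:ℝ) - i := by
          have : (i:ℝ) < N := by exact_mod_cast hiN
          linarith
        have hkey : 2*((n:ℝ) - i) ≤ (N:ℝ) - i := by
          have c1 : 2*(n:ℝ) ≤ (N:ℝ) + 2 := by exact_mod_cast hNn
          have c2 : (2:ℝ) ≤ (i:ℝ) := by exact_mod_cast h2i
          linarith
        have h2 := mul_le_mul_of_nonneg_left hkey (le_of_lt hu0)
        dsimp [g]
        rw [div_le_iff₀ h1]
        nlinarith [h2]
      -- case on k
      rcases Nat.eq_zero_or_pos k with hk0 | hkpos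
      · subst hk0
        have : ∏ i ∈ Finset.range 1, g i = g 0 := by simp
        rw [this]
        have hNpos : (0:ℝ) < N := by
          have : 0 < N := by omega
          exact_mod_cast this
        have : g 0 ≤ 1/p := by
          dsimp [g]
          push_cast
          simp only [sub_zero]
          rw [div_le_iff₀ hNpos]
          have hnN' : (n:ℝ) ≤ (N:ℝ) := by exact_mod_cast (by omega : n ≤ N)
          nlinarith [le_of_lt hu0, mul_le_mul_of_nonneg_left hnN' (le_of_lt hu0)]
        have h2M : 1/p ≤ 2*M := by
          have hle : 1/p/2 ≤ (1/p/2)^1 := by norm_num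
          have h1n : (1/p/2)^1 ≤ M ∨ 1/p/2 ≤ 1 := by
            rcases le_total (1/p/2) 1 with h | h
            · right; exact h
            · left
              calc (1/p/2)^1 ≤ (1/p/2)^n := pow_le_pow_right₀ h (by omega)
                _ ≤ M := le_max_right _ _
          rcases h1n with h | h
          · have : 1/p/2 ≤ M := by simpa using h
            linarith
          · linarith
        linarith
      · obtain ⟨j, rfl⟩ : ∃ j, k = j + 1 := ⟨k - 1, by omega⟩
        have hsplit : ∏ i ∈ Finset.range (j+2), g i
            = (∏ i ∈ Finset.range j, g (i+2)) * g 1 * g 0 := by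
          rw [Finset.prod_range_succ' g (j+1), Finset.prod_range_succ' (fun i => g (i+1)) j]
        rw [hsplit]
        have htail : ∏ i ∈ Finset.range j, g (i+2) ≤ (1/p/2)^j := by
          have hle : ∀ i ∈ Finset.range j, g (i+2) ≤ 1/p/2 := by
            intro i hi
            rw [Finset.mem_range] at hi
            exact hgle (i+2) (by omega) (by omega)
          calc ∏ i ∈ Finset.range j, g (i+2) ≤ ∏ i ∈ Finset.range j, (1/p/2) := by
                apply Finset.prod_le_prod
                · intro i hi
                  rw [Finset.mem_range] at hi
                  exact hg0 (i+2) (by omega)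
                · intro i hi; exact hle i hi
            _ = (1/p/2)^j := by rw [Finset.prod_const, Finset.card_range]
        have hhead : g 1 * g 0 ≤ (1/p)^2/2 := by
          have hN1pos : (0:ℝ) < (N:ℝ) - 1 := by
            have : 1 < N := by omega
            have : (1:ℝ) < (N:ℝ) := by exact_mod_cast this
            linarith
          have hNpos : (0:ℝ) < (N:ℝ) := by
            have : 0 < N := by omega
            exact_mod_cast this
          have hkey : 2*(n:ℝ)*((n:ℝ)-1) ≤ (N:ℝ)*((N:ℝ)-1) := by
            have c1 : 2*(n:ℝ) ≤ (N:ℝ) + 2 := by exact_mod_cast hNn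
            have c2 : (3:ℝ) ≤ (n:ℝ) := by exact_mod_cast h3
            nlinarith [mul_nonneg (by linarith : (0:ℝ) ≤ (N:ℝ) - 2*(n:ℝ) + 2) (by linarith : (0:ℝ) ≤ (N:ℝ) + 2*(n:ℝ) - 3)]
          dsimp [g]
          push_cast
          simp only [sub_zero]
          rw [div_mul_div_comm,
            div_le_div_iff₀ (by positivity) (by norm_num : (0:ℝ) < 2)]
          have hup : (0:ℝ) ≤ (1/p)^2 := by positivity
          nlinarith [mul_le_mul_of_nonneg_left hkey hup]
        have hg0' : 0 ≤ g 0 := hg0 0 (by omega)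
        have hg1' : 0 ≤ g 1 := hg0 1 (by omega)
        have htail0 : 0 ≤ ∏ i ∈ Finset.range j, g (i+2) := by
          apply Finset.prod_nonneg
          intro i hi
          rw [Finset.mem_range] at hi
          exact hg0 (i+2) (by omega)
        have step1 : (∏ i ∈ Finset.range j, g (i+2)) * g 1 * g 0 ≤ (1/p/2)^j * ((1/p)^2/2) := by
          have h1 : (∏ i ∈ Finset.range j, g (i+2)) * (g 1 * g 0) ≤ (1/p/2)^j * ((1/p)^2/2) := by
            apply mul_le_mul htail hhead (by positivity) (by positivity)
          calc (∏ i ∈ Finset.range j, g (i+2)) * g 1 * g 0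
              = (∏ i ∈ Finset.range j, g (i+2)) * (g 1 * g 0) := by ring
            _ ≤ (1/p/2)^j * ((1/p)^2/2) := h1
        have step2 : (1/p/2)^j * ((1/p)^2/2) = 2 * (1/p/2)^(j+2) := by
          rw [pow_add]
          ring
        have step3 : (1/p/2)^(j+2) ≤ M := by
          rcases le_total (1/p/2) 1 with h | h
          · calc (1/p/2)^(j+2) ≤ 1 := pow_le_one₀ (by positivity) h
              _ ≤ M := hM1
          · calc (1/p/2)^(j+2) ≤ (1/p/2)^n := pow_le_pow_right₀ h (by omega)
              _ ≤ M := le_max_right _ _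
        calc (∏ i ∈ Finset.range j, g (i+2)) * g 1 * g 0 ≤ 2 * (1/p/2)^(j+2) := by
              rw [← step2]; exact step1
          _ ≤ 2 * M := by linarith
  -- now assemble
  have hkraw : kraw n x p N = 1 + ∑ k ∈ Finset.range n,
      poch (-(n:ℝ)) (k+1) * poch (-x) (k+1) /
        ((Nat.factorial (k+1) : ℝ) * poch (-(N:ℝ)) (k+1)) * (1/p)^(k+1) := by
    unfold kraw
    rw [Finset.sum_range_succ']
    have h0 : poch (-(n:ℝ)) 0 * poch (-x) 0 / ((Nat.factorial 0 : ℝ) * poch (-(N:ℝ)) 0) * (1/p)^0 = 1 := by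
      simp [poch_zero]
    rw [h0, add_comm]
  have hupper : kraw n x p N ≤ 1 := by
    rw [hkraw]
    have : ∑ k ∈ Finset.range n, poch (-(n:ℝ)) (k+1) * poch (-x) (k+1) /
        ((Nat.factorial (k+1) : ℝ) * poch (-(N:ℝ)) (k+1)) * (1/p)^(k+1) ≤ 0 := by
      apply Finset.sum_nonpos
      intro k hk
      rw [hterm k hk]
      have h1 := (hσ k hk).1
      have h2 := hP0 k
      have hk1 : (0:ℝ) < (k:ℝ)+1 := by positivity
      have : 0 ≤ x * ((1/p)^(k+1) * (∏ i ∈ Finset.range (k+1), ((n:ℝ) - i)) /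
          (∏ i ∈ Finset.range (k+1), ((N:ℝ) - i))) * P k / ((k:ℝ)+1) := by positivity
      linarith
    linarith
  have hlower : 1 - 2*M ≤ kraw n x p N := by
    rw [hkraw]
    have hbnd : ∀ k ∈ Finset.range n,
        -(2*M*(P k - P (k+1))) ≤ poch (-(n:ℝ)) (k+1) * poch (-x) (k+1) /
          ((Nat.factorial (k+1) : ℝ) * poch (-(N:ℝ)) (k+1)) * (1/p)^(k+1) := by
      intro k hk
      rw [hterm k hk, hPstep k]
      have h1 := (hσ k hk).1
      have h2 := (hσ k hk).2
      have h3 := hP0 k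
      have hk1 : (0:ℝ) < (k:ℝ)+1 := by positivity
      have hxk : 0 ≤ x / ((k:ℝ)+1) := by positivity
      have key : x * ((1/p)^(k+1) * (∏ i ∈ Finset.range (k+1), ((n:ℝ) - i)) /
          (∏ i ∈ Finset.range (k+1), ((N:ℝ) - i))) * P k / ((k:ℝ)+1)
          ≤ 2*M*(P k * (x/((k:ℝ)+1))) := by
        have e1 : x * ((1/p)^(k+1) * (∏ i ∈ Finset.range (k+1), ((n:ℝ) - i)) /
            (∏ i ∈ Finset.range (k+1), ((N:ℝ) - i))) * P k / ((k:ℝ)+1)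
            = ((1/p)^(k+1) * (∏ i ∈ Finset.range (k+1), ((n:ℝ) - i)) /
            (∏ i ∈ Finset.range (k+1), ((N:ℝ) - i))) * (P k * (x/((k:ℝ)+1))) := by
          ring
        rw [e1]
        apply mul_le_mul_of_nonneg_right h2
        positivity
      linarith
    have hsum := Finset.sum_le_sum hbnd
    have htel : ∑ k ∈ Finset.range n, -(2*M*(P k - P (k+1)))
        = -(2*M*(P 0 - P n)) := by
      rw [Finset.sum_neg_distrib, ← Finset.mul_sum, Finset.sum_range_sub']
    have hP0val : P 0 = 1 := by simp [hPdef]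
    rw [hP0val] at htel
    have hPn := hP0 n
    have hMpos : (0:ℝ) ≤ M := by linarith
    have h2MPn : 0 ≤ 2*M*(P n) := by positivity
    rw [htel] at hsum
    nlinarith [hsum]
  -- conclude
  rw [abs_le]
  constructor
  · have h2M : 2*M ≤ 1 + max 1 (((1-p)/p)^n) := by
      rcases le_total (1/p/2) 1 with h | h
      · have hle1 : (1/p/2)^n ≤ 1 := pow_le_one₀ (by positivity) h
        have hMeq : M = 1 := by rw [hMdef]; exact max_eq_left hle1
        have := le_max_left (1:ℝ) (((1-p)/p)^n)
        rw [hMeq]; linarith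
      · have hMeq : M = (1/p/2)^n := by rw [hMdef]; exact max_eq_right (one_le_pow₀ h)
        have havg : (1/p/2)^n ≤ (1 + ((1-p)/p)^n)/2 := by
          have h1 := avg_pow hw0 n
          have heq : (1 + (1-p)/p)/2 = 1/p/2 := by rw [← huw]
          rw [heq] at h1
          exact h1
        have := le_max_right (1:ℝ) (((1-p)/p)^n)
        rw [hMeq]; linarith
    linarith
  · exact le_trans hupper (le_max_left _ _)


lemma kraw_one (N : ℕ) (hN : N ≠ 0) (p x : ℝ) : kraw 1 x p N = 1 - x*(1/p)/(N:ℝ) := by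
  have hNne : ((N:ℝ)) ≠ 0 := Nat.cast_ne_zero.mpr hN
  unfold kraw
  rw [Finset.sum_range_succ, Finset.sum_range_succ, Finset.sum_range_zero]
  have e0 : poch (-((1:ℕ):ℝ)) 0 * poch (-x) 0 / ((Nat.factorial 0 : ℝ) * poch (-(N:ℝ)) 0) * (1/p)^0 = 1 := by
    simp [poch_zero]
  have h1 : poch (-((1:ℕ):ℝ)) 1 = -1 := by simp [poch]
  have h2 : poch (-x) 1 = -x := by simp [poch]
  have h3 : poch (-(N:ℝ)) 1 = -(N:ℝ) := by simp [poch]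
  have hf1 : (Nat.factorial 1 : ℝ) = 1 := by norm_num [Nat.factorial]
  have hA : (1:ℝ)*(-(N:ℝ)) ≠ 0 := by
    rw [one_mul]; exact neg_ne_zero.mpr hNne
  have e1 : poch (-((1:ℕ):ℝ)) 1 * poch (-x) 1 / ((Nat.factorial 1 : ℝ) * poch (-(N:ℝ)) 1) * (1/p)^1
      = -(x*(1/p)/(N:ℝ)) := by
    rw [h1, h2, h3, hf1, pow_one, div_mul_eq_mul_div, ← neg_div, div_eq_div_iff hA hNne]
    ring
  rw [e0, e1]
  ring

lemma bound_one {N : ℕ} (hN : 0 < N) {p x : ℝ} (hp0 : 0 < p) (hp1 : p < 1)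
    (hx0 : 0 ≤ x) (hxN : x ≤ N) : |kraw 1 x p N| ≤ max 1 (((1-p)/p)^1) := by
  have hNne : (N:ℕ) ≠ 0 := by omega
  have hNpos : (0:ℝ) < N := by exact_mod_cast hN
  have hu0 : (0:ℝ) < 1/p := by positivity
  rw [kraw_one N hNne]
  rw [abs_le]
  have hq : x*(1/p)/(N:ℝ) ≤ 1/p := by
    rw [div_le_iff₀ hNpos]
    nlinarith
  have hq0 : 0 ≤ x*(1/p)/(N:ℝ) := by positivity
  constructor
  · have h1 : (1-p)/p ≤ max 1 (((1-p)/p)^1) := by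
      rw [pow_one]; exact le_max_right _ _
    have h3 : 1 - 1/p = -((1-p)/p) := by field_simp; ring
    linarith
  · have := le_max_left (1:ℝ) (((1-p)/p)^1)
    linarith

lemma kraw_two {N : ℕ} (hN : 2 ≤ N) (p x : ℝ) :
    kraw 2 x p N = 1 - 2*x*(1/p)/(N:ℝ) - x*(1-x)*(1/p)^2/((N:ℝ)*((N:ℝ)-1)) := by
  have hNpos : (0:ℝ) < (N:ℝ) := by
    have : 0 < N := by omega
    exact_mod_cast this
  have hN1pos : (0:ℝ) < (N:ℝ) - 1 := by
    have : (1:ℕ) < N := by omega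
    have : (1:ℝ) < (N:ℝ) := by exact_mod_cast this
    linarith
  have hNne : (N:ℝ) ≠ 0 := ne_of_gt hNpos
  have hDne : (N:ℝ)*((N:ℝ)-1) ≠ 0 := by
    exact mul_ne_zero hNne (ne_of_gt hN1pos)
  unfold kraw
  rw [Finset.sum_range_succ, Finset.sum_range_succ, Finset.sum_range_succ, Finset.sum_range_zero]
  have e0 : poch (-((2:ℕ):ℝ)) 0 * poch (-x) 0 / ((Nat.factorial 0 : ℝ) * poch (-(N:ℝ)) 0) * (1/p)^0 = 1 := by
    simp [poch_zero]
  have h1 : poch (-((2:ℕ):ℝ)) 1 = -2 := by simp [poch]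
  have h2 : poch (-x) 1 = -x := by simp [poch]
  have h3 : poch (-(N:ℝ)) 1 = -(N:ℝ) := by simp [poch]
  have h4 : poch (-((2:ℕ):ℝ)) 2 = 2 := by
    rw [poch_succ, poch_succ, poch_zero]; push_cast; ring
  have h5 : poch (-x) 2 = -(x*(1-x)) := by
    rw [poch_succ, poch_succ, poch_zero]; push_cast; ring
  have h6 : poch (-(N:ℝ)) 2 = (N:ℝ)*((N:ℝ)-1) := by
    rw [poch_succ, poch_succ, poch_zero]; push_cast; ring
  have hf1 : (Nat.factorial 1 : ℝ) = 1 := by norm_num [Nat.factorial]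
  have hf2 : (Nat.factorial 2 : ℝ) = 2 := by norm_num [Nat.factorial]
  have hA : (1:ℝ)*(-(N:ℝ)) ≠ 0 := by
    rw [one_mul]; exact neg_ne_zero.mpr hNne
  have e1 : poch (-((2:ℕ):ℝ)) 1 * poch (-x) 1 / ((Nat.factorial 1 : ℝ) * poch (-(N:ℝ)) 1) * (1/p)^1
      = -(2*x*(1/p)/(N:ℝ)) := by
    rw [h1, h2, h3, hf1, pow_one, div_mul_eq_mul_div, ← neg_div, div_eq_div_iff hA hNne]
    ring
  have hA2 : (2:ℝ)*((N:ℝ)*((N:ℝ)-1)) ≠ 0 := by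
    exact mul_ne_zero (by norm_num) hDne
  have e2 : poch (-((2:ℕ):ℝ)) 2 * poch (-x) 2 / ((Nat.factorial 2 : ℝ) * poch (-(N:ℝ)) 2) * (1/p)^2
      = -(x*(1-x)*(1/p)^2/((N:ℝ)*((N:ℝ)-1))) := by
    rw [h4, h5, h6, hf2, div_mul_eq_mul_div, ← neg_div, div_eq_div_iff hA2 hDne]
    ring
  rw [e0, e1, e2]
  ring

lemma edge2 {N : ℕ} (hN : 2 ≤ N) {p x : ℝ} (hp0 : 0 < p) (hp1 : p < 1)
    (hx0 : 0 ≤ x) (hx1 : x ≤ 1) : |kraw 2 x p N| ≤ max 1 (((1-p)/p)^2) := by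
  have hNpos : (0:ℝ) < (N:ℝ) := by
    have : 0 < N := by omega
    exact_mod_cast this
  have hN1pos : (0:ℝ) < (N:ℝ) - 1 := by
    have : (1:ℕ) < N := by omega
    have : (1:ℝ) < (N:ℝ) := by exact_mod_cast this
    linarith
  have hNN1 : (2:ℝ) ≤ (N:ℝ)*((N:ℝ)-1) := by
    have h2 : (2:ℝ) ≤ (N:ℝ) := by exact_mod_cast hN
    nlinarith
  rw [kraw_two hN]
  set w : ℝ := (1-p)/p with hwdef
  have hw0 : 0 ≤ w := div_nonneg (by linarith) (le_of_lt hp0)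
  have huw : 1/p = 1 + w := by rw [hwdef]; field_simp; ring
  have hx1x : 0 ≤ x*(1-x) := mul_nonneg hx0 (by linarith)
  set T1 : ℝ := 2*x*(1/p)/(N:ℝ) with hT1def
  set T2 : ℝ := x*(1-x)*(1/p)^2/((N:ℝ)*((N:ℝ)-1)) with hT2def
  have hT10 : 0 ≤ T1 := by rw [hT1def]; positivity
  have hT20 : 0 ≤ T2 := by rw [hT2def]; positivity
  have hT1le : T1 ≤ (1+w)*x := by
    rw [hT1def, huw, div_le_iff₀ hNpos]
    have h2 : (2:ℝ) ≤ (N:ℝ) := by exact_mod_cast hN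
    nlinarith [mul_nonneg (mul_nonneg hx0 (by linarith : (0:ℝ) ≤ 1 + w)) (by linarith : (0:ℝ) ≤ (N:ℝ) - 2)]
  have hT2le : T2 ≤ (1+w)^2*(x*(1-x))/2 := by
    rw [hT2def, huw, div_le_div_iff₀ (by positivity) (by norm_num : (0:ℝ) < 2)]
    nlinarith [mul_nonneg (mul_nonneg hx1x (by positivity : (0:ℝ) ≤ (1+w)^2)) (by linarith : (0:ℝ) ≤ (N:ℝ)*((N:ℝ)-1) - 2)]
  rw [abs_le]
  constructor
  · have hkey : (1+w)*x + (1+w)^2*(x*(1-x))/2 ≤ 1 + max 1 (w^2) := by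
      rcases le_total w 1 with hw | hw
      · have := le_max_left (1:ℝ) (w^2)
        nlinarith [sq_nonneg (1-x), mul_nonneg hx0 hw0, mul_nonneg hx1x hw0,
          mul_nonneg (mul_nonneg hx1x hw0) hw0, mul_nonneg (mul_nonneg hx0 hw0) hw0]
      · have hmax : max 1 (w^2) = w^2 := max_eq_right (by nlinarith)
        rw [hmax]
        have h4 : (0:ℝ) ≤ (2*(1+w)^2*x - (1+w)*(3+w))^2 := sq_nonneg _
        have h5 : (0:ℝ) ≤ (1+w)^2*((7*w+1)*(w-1)) := by
          apply mul_nonneg (sq_nonneg _)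
          apply mul_nonneg (by linarith) (by linarith)
        nlinarith [h4, h5, sq_nonneg (1+w)]
    linarith
  · have := le_max_left (1:ℝ) (w^2)
    linarith

lemma main_bound : ∀ (n N : ℕ) (p x : ℝ), 0 < N → 0 < p → p < 1 → 2*n ≤ N + 2 →
    0 ≤ x → x ≤ N → |kraw n x p N| ≤ max 1 (((1-p)/p)^n) := by
  intro n
  induction n with
  | zero =>
    intro N p x _ _ _ _ _ _
    rw [kraw_zero_n]
    simp
  | succ m ih =>
    intro N p x hN hp0 hp1 hNn hx0 hxN
    rcases Nat.eq_zero_or_pos m with hm0 | hmpos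
    · subst hm0
      exact bound_one hN hp0 hp1 hx0 hxN
    -- now n = m+1 ≥ 2, N ≥ 2m ≥ 2
    have hN2 : 2 ≤ N := by omega
    have hq0 : 0 < 1 - p := by linarith
    have hq1 : 1 - p < 1 := by linarith
    have hw0 : 0 ≤ (1-p)/p := div_nonneg (by linarith) (le_of_lt hp0)
    rcases le_or_gt x 1 with hx1 | hx1
    · -- bottom edge
      rcases Nat.lt_or_ge m 2 with hm1 | hm2
      · have hm : m = 1 := by omega
        subst hm
        exact edge2 hN2 hp0 hp1 hx0 hx1
      · exact edge3 (by omega) hNn hp0 hp1 hx0 hx1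
    · rcases le_or_gt ((N:ℝ)-1) x with hxN1 | hxN1
      · -- top edge via symmetry
        have hnleN : m+1 ≤ N := by omega
        rw [krawS (m+1) N hnleN p x (ne_of_gt hp0) (ne_of_lt hp1)]
        rw [abs_mul, abs_pow]
        have habs : |(p-1)/p| = (1-p)/p := by
          rw [abs_div, abs_of_neg (by linarith : p - 1 < 0), abs_of_pos hp0]
          ring
        rw [habs]
        have hy0 : 0 ≤ (N:ℝ) - x := by linarith
        have hy1 : (N:ℝ) - x ≤ 1 := by linarith
        have hedge : |kraw (m+1) ((N:ℝ)-x) (1-p) N| ≤ max 1 (((1-(1-p))/(1-p))^(m+1)) := by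
          rcases Nat.lt_or_ge m 2 with hm1 | hm2
          · have hm : m = 1 := by omega
            subst hm
            exact edge2 hN2 hq0 hq1 hy0 hy1
          · exact edge3 (by omega) hNn hq0 hq1 hy0 hy1
        have hstep : ((1-p)/p)^(m+1) * |kraw (m+1) ((N:ℝ)-x) (1-p) N|
            ≤ ((1-p)/p)^(m+1) * max 1 (((1-(1-p))/(1-p))^(m+1)) :=
          mul_le_mul_of_nonneg_left hedge (pow_nonneg hw0 _)
        refine le_trans hstep ?_
        have hmm : ((1-p)/p)^(m+1) * max 1 (((1-(1-p))/(1-p))^(m+1))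
            = max (((1-p)/p)^(m+1)) 1 := by
          rw [mul_max_of_nonneg _ _ (pow_nonneg hw0 _)]
          congr 1
          · ring
          · rw [← mul_pow]
            have : (1-p)/p * ((1-(1-p))/(1-p)) = 1 := by
              field_simp
              ring
            rw [this, one_pow]
        rw [hmm, max_comm]
      · -- interior via krawE
        obtain ⟨N', rfl⟩ : ∃ N', N = N' + 1 := ⟨N - 1, by omega⟩
        have hmN' : m ≤ N' := by omega
        rw [krawE m N' hmN' (ne_of_gt hp0) x]
        have hN'1 : ((N':ℝ)+1) = ((N'+1:ℕ):ℝ) := by push_cast; ring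
        have hx1' : (1:ℝ) ≤ x := le_of_lt hx1
        have hxle : x ≤ (N':ℝ) := by
          have : ((N'+1:ℕ):ℝ) - 1 = (N':ℝ) := by push_cast; ring
          rw [← this]
          linarith
        have hNpos : (0:ℝ) < (N':ℝ)+1 := by positivity
        have hc1 : 0 ≤ ((N':ℝ)+1 - x)/((N':ℝ)+1) := by
          apply div_nonneg _ (le_of_lt hNpos)
          linarith
        have hc2 : 0 ≤ (1-p)*x/(p*((N':ℝ)+1)) := by positivity
        have h1 : |(((N':ℝ)+1 - x)/((N':ℝ)+1)) * kraw m x p N'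
            - ((1-p)*x/(p*((N':ℝ)+1))) * kraw m (x-1) p N'|
            ≤ (((N':ℝ)+1 - x)/((N':ℝ)+1)) * |kraw m x p N'|
              + ((1-p)*x/(p*((N':ℝ)+1))) * |kraw m (x-1) p N'| := by
          refine le_trans (abs_sub _ _) ?_
          rw [abs_mul, abs_mul]
          rw [abs_of_nonneg hc1, abs_of_nonneg hc2]
        refine le_trans h1 ?_
        have hN'pos : 0 < N' := by omega
        have hI1 : |kraw m x p N'| ≤ max 1 (((1-p)/p)^m) :=
          ih N' p x hN'pos hp0 hp1 (by omega) hx0 hxle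
        have hI2 : |kraw m (x-1) p N'| ≤ max 1 (((1-p)/p)^m) :=
          ih N' p (x-1) hN'pos hp0 hp1 (by omega) (by linarith) (by linarith)
        set W' : ℝ := max 1 (((1-p)/p)^m) with hW'def
        have hW'0 : 0 ≤ W' := le_trans zero_le_one (le_max_left _ _)
        have h2 : (((N':ℝ)+1 - x)/((N':ℝ)+1)) * |kraw m x p N'|
              + ((1-p)*x/(p*((N':ℝ)+1))) * |kraw m (x-1) p N'|
            ≤ (((N':ℝ)+1 - x)/((N':ℝ)+1)) * W' + ((1-p)*x/(p*((N':ℝ)+1))) * W' := by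
          apply add_le_add
          · exact mul_le_mul_of_nonneg_left hI1 hc1
          · exact mul_le_mul_of_nonneg_left hI2 hc2
        refine le_trans h2 ?_
        have hcoef : ((1-p)*x/(p*((N':ℝ)+1))) = ((1-p)/p)*(x/((N':ℝ)+1)) := by
          field_simp
        rw [hcoef]
        rcases le_total ((1-p)/p) 1 with hw | hw
        · have hWm : W' = 1 := by
            rw [hW'def]
            exact max_eq_left (pow_le_one₀ hw0 hw)
          have hmax : max 1 (((1-p)/p)^(m+1)) = 1 :=
            max_eq_left (pow_le_one₀ hw0 hw)
          rw [hWm, hmax, mul_one, mul_one]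
          have : ((1-p)/p)*(x/((N':ℝ)+1)) ≤ 1*(x/((N':ℝ)+1)) :=
            mul_le_mul_of_nonneg_right hw (by positivity)
          have heq : (((N':ℝ)+1 - x)/((N':ℝ)+1)) + x/((N':ℝ)+1) = 1 := by
            field_simp
            ring
          linarith
        · have hWm : W' = ((1-p)/p)^m := by
            rw [hW'def]
            exact max_eq_right (one_le_pow₀ hw)
          have hmax : max 1 (((1-p)/p)^(m+1)) = ((1-p)/p)^(m+1) :=
            max_eq_right (one_le_pow₀ hw)
          rw [hWm, hmax, pow_succ]
          have hkey : (((N':ℝ)+1 - x)/((N':ℝ)+1)) + ((1-p)/p)*(x/((N':ℝ)+1)) ≤ (1-p)/p := by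
            have h := mul_le_mul_of_nonneg_right hw (show (0:ℝ) ≤ (N':ℝ)+1 - x by linarith)
            have e : (((N':ℝ)+1 - x)/((N':ℝ)+1)) + ((1-p)/p)*(x/((N':ℝ)+1))
                = (((N':ℝ)+1 - x) + ((1-p)/p)*x)/((N':ℝ)+1) := by ring
            rw [e, div_le_iff₀ hNpos]
            nlinarith [h]
          have e2 : (((N':ℝ)+1 - x)/((N':ℝ)+1)) * (((1-p)/p)^m)
                + ((1-p)/p)*(x/((N':ℝ)+1)) * (((1-p)/p)^m)
              = ((((N':ℝ)+1 - x)/((N':ℝ)+1)) + ((1-p)/p)*(x/((N':ℝ)+1))) * (((1-p)/p)^m) := by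
            ring
          rw [e2]
          calc ((((N':ℝ)+1 - x)/((N':ℝ)+1)) + ((1-p)/p)*(x/((N':ℝ)+1))) * (((1-p)/p)^m)
              ≤ ((1-p)/p) * (((1-p)/p)^m) :=
                mul_le_mul_of_nonneg_right hkey (pow_nonneg hw0 m)
            _ = ((1-p)/p)^m * ((1-p)/p) := by ring

end KrawAux

theorem krawtchouk_bound (N : ℕ) (hN : 0 < N) (p : ℝ) (hp : p ∈ Set.Ioo (0 : ℝ) 1)
    (n : ℕ) (hn : (n : ℝ) ≤ (N : ℝ) / 2 + 1) (x : ℝ) (hx : x ∈ Set.Icc (0 : ℝ) N) :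
    |kraw n x p N| ≤ max 1 (((1 - p) / p) ^ n) ∧
      max 1 (((1 - p) / p) ^ n) = max |kraw n 0 p N| |kraw n (N : ℝ) p N| := by
  obtain ⟨hp0, hp1⟩ := hp
  obtain ⟨hx0, hxN⟩ := hx
  have h2n : 2*n ≤ N + 2 := by
    have h : 2*(n:ℝ) ≤ (N:ℝ) + 2 := by linarith
    exact_mod_cast h
  have hnN : n ≤ N := by omega
  constructor
  · exact KrawAux.main_bound n N p x hN hp0 hp1 h2n hx0 hxN
  · rw [KrawAux.kraw_at_zero, KrawAux.kraw_at_N hnN (ne_of_gt hp0)]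
    rw [abs_one, abs_pow]
    have habs : |(p-1)/p| = (1-p)/p := by
      rw [abs_div, abs_of_neg (by linarith : p - 1 < 0), abs_of_pos hp0]
      ring
    rw [habs]
end
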